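/- arXiv:2601.15680 — 5 statements merged into one kernel-verified Lean document; each statement's English description precedes it below -/
import Mathlib

section
/- For all integers n ≥ 0 and all integers k ≥ j ≥ 0, both a_{3(k-j)+3, 3k+6}(3n+1) ≡ 0 (mod 3) and a_{3(k-j)+3, 3k+6}(3n+2) ≡ 0 (mod 3). -/
/-- `colorPart r s n` is the number `a_{r,s}(n)` of partitions of `n` in which even parts
may appear in any of `r` colors and odd parts in any of `s` colors, realized as the
coefficient of `q^n` in `∏_{m ≥ 1} (1 - q^{2m-1})^{-s} (1 - q^{2m})^{-r}`.  Since the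
factors with `2m - 1 > n` do not affect the coefficient of `q^n`, this coefficient equals
the coefficient of `q^n` in the finite product of the factors for `1 ≤ m ≤ n + 1`. -/
noncomputable def colorPart (r s n : ℕ) : ℤ :=
  PowerSeries.coeff (R := ℤ) n
    (∏ m ∈ Finset.range (n + 1),
      (PowerSeries.invOfUnit (1 - PowerSeries.X ^ (2 * m + 1)) 1) ^ s *
      (PowerSeries.invOfUnit (1 - PowerSeries.X ^ (2 * m + 2)) 1) ^ r)


private lemma cpInvUnique {R : Type*} [CommRing R] {u a b : PowerSeries R}
    (ha : u * a = 1) (hb : u * b = 1) : a = b := by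
  calc a = a * (u * b) := by rw [hb, mul_one]
    _ = (u * a) * b := by ring
    _ = b := by rw [ha, one_mul]

private noncomputable def cpGeo (m : ℕ) : PowerSeries (ZMod 3) :=
  PowerSeries.mk fun i => if m ∣ i then 1 else 0

private lemma cpGeo_mul (m : ℕ) (hm : 0 < m) :
    ((1 : PowerSeries (ZMod 3)) - PowerSeries.X ^ m) * cpGeo m = 1 := by
  ext n
  rw [sub_mul, one_mul, map_sub, PowerSeries.coeff_X_pow_mul', PowerSeries.coeff_one]
  simp only [cpGeo, PowerSeries.coeff_mk]
  rcases Nat.eq_zero_or_pos n with rfl | hn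
  · simp [hm.ne']
  · rw [if_neg hn.ne']
    by_cases hd : m ∣ n
    · have hle : m ≤ n := Nat.le_of_dvd hn hd
      have hd' : m ∣ n - m := (Nat.dvd_sub hd dvd_rfl)
      simp [hd, hle, hd']
    · rw [if_neg hd]
      by_cases hle : m ≤ n
      · have hnd : ¬ m ∣ n - m := fun h => hd (by
          have := Nat.dvd_add h (dvd_refl m)
          rwa [Nat.sub_add_cancel hle] at this)
        simp [hle, hnd]
      · simp [hle]

private def cpPdiv (f : PowerSeries (ZMod 3)) : Prop :=
  ∀ i, ¬ (3 ∣ i) → PowerSeries.coeff (R := ZMod 3) i f = 0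

private lemma cpPdiv_one : cpPdiv 1 := by
  intro i hi
  rw [PowerSeries.coeff_one, if_neg]
  rintro rfl; exact hi ⟨0, rfl⟩

private lemma cpPdiv_mul {f g : PowerSeries (ZMod 3)} (hf : cpPdiv f) (hg : cpPdiv g) :
    cpPdiv (f * g) := by
  intro i hi
  rw [PowerSeries.coeff_mul]
  refine Finset.sum_eq_zero fun p hp => ?_
  rw [Finset.HasAntidiagonal.mem_antidiagonal] at hp
  by_cases h1 : 3 ∣ p.1
  · have h2 : ¬ 3 ∣ p.2 := fun h => hi (hp ▸ Nat.dvd_add h1 h)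
    rw [hg p.2 h2, mul_zero]
  · rw [hf p.1 h1, zero_mul]

private lemma cpPdiv_pow {f : PowerSeries (ZMod 3)} (hf : cpPdiv f) (m : ℕ) :
    cpPdiv (f ^ m) := by
  induction m with
  | zero => simpa using cpPdiv_one
  | succ m ih => rw [pow_succ]; exact cpPdiv_mul ih hf

private lemma cpPdiv_geo (m : ℕ) : cpPdiv (cpGeo (3 * m)) := by
  intro i hi
  simp only [cpGeo, PowerSeries.coeff_mk]
  rw [if_neg fun h => hi (dvd_trans ⟨m, rfl⟩ h)]

private lemma cpCube (a : PowerSeries (ZMod 3)) : (1 - a) ^ 3 = 1 - a ^ 3 := by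
  have h3 : (3 : PowerSeries (ZMod 3)) = 0 := by
    have h := map_ofNat (PowerSeries.C (R := ZMod 3)) 3
    rw [← h, show (OfNat.ofNat 3 : ZMod 3) = 0 by decide, map_zero]
  have h : (1 - a) ^ 3 = 1 - a ^ 3 - 3 * (a - a ^ 2) := by ring
  rw [h, h3, zero_mul, sub_zero]

private lemma cpMapInvCube (d : ℕ) (hd : 0 < d) :
    (PowerSeries.map (Int.castRingHom (ZMod 3))
      (PowerSeries.invOfUnit (1 - PowerSeries.X ^ d) 1)) ^ 3 = cpGeo (3 * d) := by
  have hconst : PowerSeries.constantCoeff (R := ℤ) (1 - PowerSeries.X ^ d) = ((1 : ℤˣ) : ℤ) := by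
    simp [hd.ne']
  have h1 : ((1 : PowerSeries ℤ) - PowerSeries.X ^ d) *
      PowerSeries.invOfUnit (1 - PowerSeries.X ^ d) 1 = 1 :=
    PowerSeries.mul_invOfUnit _ _ hconst
  have h2 : ((1 : PowerSeries (ZMod 3)) - PowerSeries.X ^ d) *
      PowerSeries.map (Int.castRingHom (ZMod 3))
        (PowerSeries.invOfUnit (1 - PowerSeries.X ^ d) 1) = 1 := by
    have := congrArg (PowerSeries.map (Int.castRingHom (ZMod 3))) h1
    simpa [map_sub, map_pow] using this
  have h3 : ((1 : PowerSeries (ZMod 3)) - PowerSeries.X ^ (3 * d)) *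
      (PowerSeries.map (Int.castRingHom (ZMod 3))
        (PowerSeries.invOfUnit (1 - PowerSeries.X ^ d) 1)) ^ 3 = 1 := by
    have := congrArg (· ^ 3) h2
    simp only [mul_pow, one_pow] at this
    rw [cpCube, ← pow_mul, mul_comm d 3] at this
    exact this
  exact cpInvUnique h3 (cpGeo_mul (3 * d) (by positivity))

theorem colorPart_cong_stmt0 (n j k : ℕ) (hjk : j ≤ k) :
    colorPart (3 * (k - j) + 3) (3 * k + 6) (3 * n + 1) ≡ 0 [ZMOD 3] ∧
    colorPart (3 * (k - j) + 3) (3 * k + 6) (3 * n + 2) ≡ 0 [ZMOD 3] := by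
  have key : ∀ N : ℕ, ¬ (3 ∣ N) →
      colorPart (3 * (k - j) + 3) (3 * k + 6) N ≡ 0 [ZMOD 3] := by
    intro N hN
    have hcast : ((colorPart (3 * (k - j) + 3) (3 * k + 6) N : ℤ) : ZMod 3) = 0 := by
      unfold colorPart
      rw [show ((PowerSeries.coeff (R := ℤ) N _ : ℤ) : ZMod 3) = _ from
        (PowerSeries.coeff_map (Int.castRingHom (ZMod 3)) N _).symm]
      rw [map_prod]
      have hP : cpPdiv (∏ m ∈ Finset.range (N + 1),
          PowerSeries.map (Int.castRingHom (ZMod 3))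
            ((PowerSeries.invOfUnit (1 - PowerSeries.X ^ (2 * m + 1)) 1) ^ (3 * k + 6) *
             (PowerSeries.invOfUnit (1 - PowerSeries.X ^ (2 * m + 2)) 1) ^
               (3 * (k - j) + 3))) := by
        refine Finset.prod_induction _ cpPdiv (fun _ _ => cpPdiv_mul) cpPdiv_one fun m _ => ?_
        rw [map_mul, map_pow, map_pow]
        refine cpPdiv_mul ?_ ?_
        · rw [show 3 * k + 6 = 3 * (k + 2) by ring, pow_mul,
            cpMapInvCube _ (by omega)]
          exact cpPdiv_pow (cpPdiv_geo _) _
        · rw [show 3 * (k - j) + 3 = 3 * ((k - j) + 1) by ring, pow_mul,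
            cpMapInvCube _ (by omega)]
          exact cpPdiv_pow (cpPdiv_geo _) _
      exact hP N hN
    have hdvd := (ZMod.intCast_zmod_eq_zero_iff_dvd _ 3).mp hcast
    rw [Int.ModEq]
    omega
  exact ⟨key (3 * n + 1) (by omega), key (3 * n + 2) (by omega)⟩
end

section
/- For all integers n ≥ 0, a_{2,4}(27n) ≡ a_{2,4}(3n) (mod 3). -/
open PowerSeries Finset

abbrev S3 := PowerSeries (ZMod 3)

noncomputable def Qe (j : ℕ) : S3 := ∏ i ∈ Finset.range j, (1 - (X : S3) ^ (2*i+2))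
noncomputable def Ao (j : ℕ) : S3 := ∏ i ∈ Finset.range j, (1 - (X : S3) ^ (2*i+1))

noncomputable def gbz : ℕ → ℤ → S3
  | 0, k => if k = 0 then 1 else 0
  | (n+1), k => gbz n k + (X : S3) ^ (2*((n:ℤ)+1-k)).toNat * gbz n (k-1)

lemma gbz_neg (n : ℕ) : ∀ k : ℤ, k < 0 → gbz n k = 0 := by
  induction n with
  | zero => intro k hk; simp [gbz, hk.ne]
  | succ n ih => intro k hk; simp [gbz, ih k hk, ih (k-1) (by omega)]

lemma gbz_gt (n : ℕ) : ∀ k : ℤ, (n:ℤ) < k → gbz n k = 0 := by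
  induction n with
  | zero => intro k hk; simp [gbz]; omega
  | succ n ih => intro k hk; simp [gbz, ih k (by push_cast at hk ⊢; omega), ih (k-1) (by push_cast at hk ⊢; omega)]

lemma gbz_zero (n : ℕ) : gbz n 0 = 1 := by
  induction n with
  | zero => simp [gbz]
  | succ n ih => simp [gbz, ih, gbz_neg n (-1) (by omega)]

lemma gbz_diag (n : ℕ) : gbz n n = 1 := by
  induction n with
  | zero => simp [gbz]
  | succ n ih =>
      show gbz n (n+1) + (X:S3) ^ _ * gbz n ((n:ℤ)+1-1) = 1
      rw [gbz_gt n ((n:ℤ)+1) (by omega)]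
      have : ((n:ℤ)+1-1) = (n:ℤ) := by ring
      rw [this, ih]
      have h2 : (2*((n:ℤ)+1-((n:ℤ)+1))).toNat = 0 := by omega
      simp [h2]

lemma pascalA (n : ℕ) (k : ℤ) :
    gbz (n+1) k = gbz n k + (X : S3) ^ (2*((n:ℤ)+1-k)).toNat * gbz n (k-1) := rfl

lemma pascalB (n : ℕ) : ∀ k : ℤ,
    gbz (n+1) k = (X : S3) ^ (2*k).toNat * gbz n k + gbz n (k-1) := by
  induction n with
  | zero =>
      intro k
      rcases lt_trichotomy k 0 with hk | hk | hk
      · simp [gbz_neg _ _ hk, gbz_neg 0 (k-1) (by omega)]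
      · subst hk; simp [gbz_zero, gbz_neg 0 (-1) (by omega)]
      · rcases eq_or_lt_of_le (by omega : (1:ℤ) ≤ k) with hk1 | hk1
        · subst hk1
          have h1 : gbz 1 ((1:ℕ):ℤ) = 1 := gbz_diag 1
          push_cast at h1
          show gbz 1 1 = _
          rw [h1, gbz_gt 0 1 (by norm_num)]
          norm_num [gbz_zero]
        · rw [show (0:ℕ)+1 = 1 from rfl, gbz_gt 1 k (by push_cast; omega),
            gbz_gt 0 k (by push_cast; omega), gbz_gt 0 (k-1) (by push_cast; omega)]
          simp
  | succ n ih =>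
      intro k
      rcases lt_trichotomy k 0 with hk | hk | hk
      · simp [gbz_neg _ _ hk, gbz_neg _ _ (show k-1<0 by omega)]
      · subst hk; simp [gbz_zero, gbz_neg _ (-1) (by omega)]
      · rcases le_or_gt k ((n:ℤ)+2) with hk2 | hk2
        · have e2cast : ((n+1:ℕ):ℤ) + 1 - k = (n:ℤ)+2-k := by push_cast; ring
          have hL : gbz (n+1+1) k
              = X ^ (2*k).toNat * gbz n k + gbz n (k-1)
                + X ^ (2*((n:ℤ)+2-k)).toNat * (X ^ (2*(k-1)).toNat * gbz n (k-1) + gbz n (k-2)) := by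
            rw [pascalA (n+1) k, e2cast, ih k, ih (k-1)]
            ring
          have hR : X ^ (2*k).toNat * gbz (n+1) k + gbz (n+1) (k-1)
              = X ^ (2*k).toNat * (gbz n k + X ^ (2*((n:ℤ)+1-k)).toNat * gbz n (k-1))
                + (gbz n (k-1) + X ^ (2*((n:ℤ)+1-(k-1))).toNat * gbz n (k-2)) := by
            rw [pascalA n k, pascalA n (k-1), show k-1-1 = k-2 by ring]
          rw [hL, hR]
          have ee : ((n:ℤ)+1-(k-1)) = ((n:ℤ)+2-k) := by ring
          rw [ee]
          by_cases hkn : k ≤ (n:ℤ)+1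
          · have h1 : X ^ (2*((n:ℤ)+2-k)).toNat * (X ^ (2*(k-1)).toNat * gbz n (k-1))
                = X ^ (2*k).toNat * (X ^ (2*((n:ℤ)+1-k)).toNat * gbz n (k-1)) := by
              rw [← mul_assoc, ← mul_assoc, ← pow_add, ← pow_add]
              congr 2
              omega
            linear_combination h1
          · have h0 : gbz n (k-1) = 0 := gbz_gt n (k-1) (by omega)
            rw [h0]
            ring
        · rw [show n+1+1 = n+2 from rfl, gbz_gt (n+2) k (by push_cast; omega),
            gbz_gt (n+1) k (by push_cast; omega), gbz_gt (n+1) (k-1) (by push_cast; omega)]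
          simp

lemma twostep (n : ℕ) (k : ℤ) :
    gbz (n+2) k = X ^ (2*k).toNat * gbz n k + (1 + (X:S3)^(2*n+2)) * gbz n (k-1)
      + X ^ (2*((n:ℤ)+2-k)).toNat * gbz n (k-2) := by
  rw [show n+2 = (n+1)+1 from rfl, pascalB (n+1) k, pascalA n k, pascalA n (k-1),
    show k-1-1 = k-2 by ring, show ((n:ℤ)+1-(k-1)) = ((n:ℤ)+2-k) by ring]
  by_cases hkn : 0 ≤ k ∧ k ≤ (n:ℤ)+1
  · have h1 : (X:S3) ^ (2*k).toNat * (X ^ (2*((n:ℤ)+1-k)).toNat * gbz n (k-1))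
        = X^(2*n+2) * gbz n (k-1) := by
      rw [← mul_assoc, ← pow_add]
      congr 2
      omega
    linear_combination h1
  · have h0 : gbz n (k-1) = 0 := by
      rcases (not_and_or.mp hkn) with h | h
      · exact gbz_neg n (k-1) (by omega)
      · exact gbz_gt n (k-1) (by omega)
    rw [h0]
    ring

lemma Qe_succ (m : ℕ) : Qe (m+1) = Qe m * (1 - (X:S3)^(2*m+2)) := Finset.prod_range_succ _ m

lemma gbz_fact : ∀ n k : ℕ, k ≤ n → gbz n (k:ℤ) * (Qe k * Qe (n-k)) = Qe n := by
  intro n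
  induction n with
  | zero =>
      intro k hk
      interval_cases k
      simp [gbz_zero, Qe]
  | succ n ih =>
      intro k hk
      match k with
      | 0 =>
        push_cast
        simp [gbz_zero, Qe]
      | (k'+1) =>
        rcases Nat.lt_or_ge k' n with hk' | hk'
        · -- main case : k'+1 <= n
          have h1 : gbz (n+1) ((k'+1 : ℕ):ℤ)
              = gbz n ((k'+1 : ℕ):ℤ) + X ^ (2*(n-(k'+1))+2) * gbz n ((k' : ℕ):ℤ) := by
            rw [pascalA n]
            push_cast
            rw [show ((k':ℤ)+1-1) = (k':ℤ) by ring]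
            congr 3
            omega
          have e1 : n + 1 - (k'+1) = (n - (k'+1)) + 1 := by omega
          have e2 : n - k' = (n - (k'+1)) + 1 := by omega
          have ihA := ih (k'+1) (by omega)
          have ihB := ih k' (by omega)
          rw [Qe_succ k'] at ihA
          rw [e2, Qe_succ (n-(k'+1))] at ihB
          have eX : (X:S3)^(2*n+2) = X^(2*(n-(k'+1))+2) * X^(2*k'+2) := by
            rw [← pow_add]
            congr 1
            omega
          rw [e1, h1, Qe_succ (n-(k'+1)), Qe_succ k', Qe_succ n, eX]
          linear_combination (1 - (X:S3)^(2*(n-(k'+1))+2)) * ihA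
            + (X:S3)^(2*(n-(k'+1))+2) * (1 - (X:S3)^(2*k'+2)) * ihB
        · -- k' = n
          have hkn : k' = n := by omega
          subst hkn
          have h1 : gbz (k'+1) ((k'+1 : ℕ):ℤ)
              = gbz k' ((k'+1 : ℕ):ℤ) + X ^ 0 * gbz k' ((k' : ℕ):ℤ) := by
            rw [pascalA k']
            push_cast
            rw [show ((k':ℤ)+1-1) = (k':ℤ) by ring]
            congr 3
            omega
          rw [h1, gbz_gt k' _ (by push_cast; omega), gbz_diag k']
          simp [Qe]

/-- sign (-1)^k as an element of ZMod 3 -/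
def wsgn (k : ℤ) : ZMod 3 := if Even k then 1 else -1

lemma wsgn_add_one (k : ℤ) : wsgn (k+1) = - wsgn k := by
  by_cases h : Even k <;> simp [wsgn, Int.even_add_one, h]

lemma wsgn_sub_one (k : ℤ) : wsgn (k-1) = - wsgn k := by
  by_cases h : Even k <;> simp [wsgn, Int.even_sub_one, h]

noncomputable def ff (N : ℕ) (k : ℤ) : S3 :=
  C (R := ZMod 3) (wsgn k) * ((X:S3) ^ (k.natAbs^2) * gbz (2*N) ((N:ℤ)+k))

noncomputable def GS (N : ℕ) : S3 := ∑ k ∈ Finset.Icc (-(N:ℤ)) (N:ℤ), ff N k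

lemma GS_ext (N : ℕ) (a b : ℤ) (ha : a ≤ -(N:ℤ)) (hb : (N:ℤ) ≤ b) :
    ∑ k ∈ Finset.Icc a b, ff N k = GS N := by
  symm
  apply Finset.sum_subset (Finset.Icc_subset_Icc ha hb)
  intro x hx hnx
  have h1 := Finset.mem_Icc.mp hx
  have h2 : ¬(-(N:ℤ) ≤ x ∧ x ≤ N) := fun h => hnx (Finset.mem_Icc.mpr h)
  have h3 : gbz (2*N) ((N:ℤ)+x) = 0 := by
    rcases not_and_or.mp h2 with h | h
    · exact gbz_neg _ _ (by omega)
    · exact gbz_gt _ _ (by push_cast; omega)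
  simp [ff, h3]

lemma sum_shift (a b c : ℤ) (f : ℤ → S3) :
    ∑ k ∈ Finset.Icc a b, f (k+c) = ∑ k ∈ Finset.Icc (a+c) (b+c), f k := by
  rw [← Finset.map_add_right_Icc a b c, Finset.sum_map]
  simp [addRightEmbedding_apply]

lemma sum_shift_down (a b : ℤ) (f : ℤ → S3) :
    ∑ k ∈ Finset.Icc a b, f (k-1) = ∑ k ∈ Finset.Icc (a-1) (b-1), f k := by
  have := sum_shift a b (-1) f
  simp only [← sub_eq_add_neg] at this
  exact this

lemma natAbs_shift_up (N : ℕ) (k : ℤ) (h : -(N:ℤ)-1 ≤ k) :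
    k.natAbs^2 + (2*((N:ℤ)+1+k)).toNat = (k+1).natAbs^2 + (2*N+1) := by
  have h0 : (0:ℤ) ≤ 2*((N:ℤ)+1+k) := by omega
  have : ((k.natAbs^2 + (2*((N:ℤ)+1+k)).toNat : ℕ) : ℤ)
      = (((k+1).natAbs^2 + (2*N+1) : ℕ) : ℤ) := by
    push_cast [Int.toNat_of_nonneg h0, Int.natAbs_sq]
    simp only [sq_abs]
    ring
  exact_mod_cast this

lemma natAbs_shift_down (N : ℕ) (k : ℤ) (h : k ≤ (N:ℤ)+1) :
    k.natAbs^2 + (2*((N:ℤ)+1-k)).toNat = (k-1).natAbs^2 + (2*N+1) := by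
  have h0 : (0:ℤ) ≤ 2*((N:ℤ)+1-k) := by omega
  have : ((k.natAbs^2 + (2*((N:ℤ)+1-k)).toNat : ℕ) : ℤ)
      = (((k-1).natAbs^2 + (2*N+1) : ℕ) : ℤ) := by
    push_cast [Int.toNat_of_nonneg h0, Int.natAbs_sq]
    simp only [sq_abs]
    ring
  exact_mod_cast this

lemma jtp1 : ∀ N : ℕ, Ao N ^ 2 = GS N := by
  intro N
  induction N with
  | zero =>
      simp [Ao, GS, ff, gbz_zero, wsgn]
  | succ N ih =>
      have hAo : Ao (N+1) = Ao N * (1 - (X:S3)^(2*N+1)) := Finset.prod_range_succ _ N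
      have key : ∀ k ∈ Finset.Icc (-((N:ℤ)+1)) ((N:ℤ)+1),
          C (R := ZMod 3) (wsgn k) * ((X:S3) ^ (k.natAbs^2) * gbz (2*N+2) ((N:ℤ)+1+k))
          = (1 + (X:S3)^(2*(2*N)+2)) * ff N k
            + (- (X:S3)^(2*N+1)) * ff N (k+1) + (- (X:S3)^(2*N+1)) * ff N (k-1) := by
        intro k hk
        have hmem := Finset.mem_Icc.mp hk
        have ht := twostep (2*N) ((N:ℤ)+1+k)
        rw [show (N:ℤ)+1+k-1 = (N:ℤ)+k by ring, show (N:ℤ)+1+k-2 = (N:ℤ)+(k-1) by ring] at ht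
        have he3 : (((2*N:ℕ)):ℤ)+2-((N:ℤ)+1+k) = (N:ℤ)+1-k := by push_cast; ring
        rw [he3] at ht
        rw [ht]
        simp only [ff]
        rw [show (N:ℤ)+(k+1) = (N:ℤ)+1+k by ring]
        have e1 : (X:S3)^(k.natAbs^2) * X ^ (2*((N:ℤ)+1+k)).toNat
            = X ^ ((k+1).natAbs^2) * X^(2*N+1) := by
          rw [← pow_add, ← pow_add, natAbs_shift_up N k (by omega)]
        have e2 : (X:S3)^(k.natAbs^2) * X ^ (2*((N:ℤ)+1-k)).toNat
            = X ^ ((k-1).natAbs^2) * X^(2*N+1) := by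
          rw [← pow_add, ← pow_add, natAbs_shift_down N k (by omega)]
        have s1 : C (R := ZMod 3) (wsgn (k+1)) = - C (R := ZMod 3) (wsgn k) := by
          rw [wsgn_add_one]; simp
        have s2 : C (R := ZMod 3) (wsgn (k-1)) = - C (R := ZMod 3) (wsgn k) := by
          rw [wsgn_sub_one]; simp
        rw [s1, s2]
        have he2' : (2*((N:ℤ)+1+k)).toNat = (2*((N:ℤ)+1+k)).toNat := rfl
        linear_combination (C (R := ZMod 3) (wsgn k) * gbz (2*N) ((N:ℤ)+1+k)) * e1
          + (C (R := ZMod 3) (wsgn k) * gbz (2*N) ((N:ℤ)+(k-1))) * e2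
      have hGS1 : GS (N+1) = ∑ k ∈ Finset.Icc (-((N:ℤ)+1)) ((N:ℤ)+1),
          C (R := ZMod 3) (wsgn k) * ((X:S3) ^ (k.natAbs^2) * gbz (2*N+2) ((N:ℤ)+1+k)) := by
        unfold GS ff
        rw [show ((N+1:ℕ):ℤ) = (N:ℤ)+1 from by push_cast; ring,
          show 2*(N+1) = 2*N+2 from by ring]
      have hsplit : GS (N+1)
          = (1 + (X:S3)^(2*(2*N)+2)) * GS N
            + (- (X:S3)^(2*N+1)) * GS N + (- (X:S3)^(2*N+1)) * GS N := by
        rw [hGS1, Finset.sum_congr rfl key, Finset.sum_add_distrib, Finset.sum_add_distrib,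
          ← Finset.mul_sum, ← Finset.mul_sum, ← Finset.mul_sum,
          sum_shift _ _ 1 (ff N), sum_shift_down _ _ (ff N)]
        rw [GS_ext N _ _ (by omega) (by omega), GS_ext N _ _ (by omega) (by omega),
          GS_ext N _ _ (by omega) (by omega)]
      rw [hAo, hsplit, ← ih]
      ring

/-! generic dvd utilities -/

lemma dvd_mul_sub_one {R : Type*} [CommRing R] {x a b : R} (ha : x ∣ a - 1) (hb : x ∣ b - 1) :
    x ∣ a*b - 1 := by
  have h : a*b - 1 = (a-1)*b + (b-1) := by ring
  rw [h]; exact dvd_add (ha.mul_right b) hb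

lemma dvd_pow_sub_one {R : Type*} [CommRing R] {x a : R} (ha : x ∣ a - 1) :
    ∀ e : ℕ, x ∣ a^e - 1
  | 0 => by simp
  | (e+1) => by rw [pow_succ]; exact dvd_mul_sub_one (dvd_pow_sub_one ha e) ha

lemma dvd_prod_sub_one {R : Type*} [CommRing R] {ι : Type*} (s : Finset ι) (f : ι → R)
    (x : R) (h : ∀ i ∈ s, x ∣ f i - 1) : x ∣ (∏ i ∈ s, f i) - 1 := by
  classical
  induction s using Finset.induction_on with
  | empty => simp
  | @insert a s' hx ih =>
      rw [Finset.prod_insert hx]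
      exact dvd_mul_sub_one (h a (Finset.mem_insert_self a s'))
        (ih fun i hi => h i (Finset.mem_insert_of_mem hi))

/-! Qe facts -/

lemma Qe_constCoeff (j : ℕ) : constantCoeff (R := ZMod 3) (Qe j) = 1 := by
  rw [Qe, map_prod]
  apply Finset.prod_eq_one
  intro i _
  simp [constantCoeff_X]

lemma Qe_unit (j : ℕ) : IsUnit (Qe j) := by
  rw [PowerSeries.isUnit_iff_constantCoeff, Qe_constCoeff]
  exact isUnit_one

lemma Qe_sub (a b : ℕ) (h : a ≤ b) : (X:S3)^(2*a+2) ∣ Qe b - Qe a := by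
  have hb : b = a + (b - a) := by omega
  rw [hb, Qe, Finset.prod_range_add, ← Qe]
  have h2 : Qe a * ∏ i ∈ Finset.range (b-a), (1 - (X:S3)^(2*(a+i)+2)) - Qe a
      = Qe a * ((∏ i ∈ Finset.range (b-a), (1 - (X:S3)^(2*(a+i)+2))) - 1) := by ring
  rw [h2]
  apply Dvd.dvd.mul_left
  apply dvd_prod_sub_one
  intro i _
  have : (1 - (X:S3)^(2*(a+i)+2)) - 1 = -(X^(2*(a+i)+2)) := by ring
  rw [this]
  exact (pow_dvd_pow (X:S3) (by omega)).neg_right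

lemma Qgb_key (N a b : ℕ) (hab : a + b = 2*N) :
    (X:S3)^(2*(min a b)+2) ∣ Qe N * gbz (2*N) (b:ℤ) - 1 := by
  have hfact := gbz_fact (2*N) b (by omega)
  have h2Nb : 2*N - b = a := by omega
  rw [h2Nb] at hfact
  have h1 : (Qe N * gbz (2*N) (b:ℤ) - 1) * (Qe b * Qe a)
      = Qe N * Qe (2*N) - Qe b * Qe a := by
    linear_combination Qe N * hfact
  have h2 : (X:S3)^(2*(min a b)+2) ∣ Qe N * Qe (2*N) - Qe b * Qe a := by
    rcases le_total a b with hab' | hab'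
    · rw [min_eq_left hab']
      have e : Qe N * Qe (2*N) - Qe b * Qe a
          = (Qe N - Qe a) * Qe (2*N) + Qe a * (Qe (2*N) - Qe b) := by ring
      rw [e]
      exact dvd_add ((Qe_sub a N (by omega)).mul_right _)
        (((pow_dvd_pow (X:S3) (by omega)).trans (Qe_sub b (2*N) (by omega))).mul_left _)
    · rw [min_eq_right hab']
      have e : Qe N * Qe (2*N) - Qe b * Qe a
          = (Qe N - Qe b) * Qe (2*N) + Qe b * (Qe (2*N) - Qe a) := by ring
      rw [e]
      exact dvd_add ((Qe_sub b N (by omega)).mul_right _)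
        (((pow_dvd_pow (X:S3) (by omega)).trans (Qe_sub a (2*N) (by omega))).mul_left _)
  rw [← h1] at h2
  exact (((Qe_unit b).mul (Qe_unit a)).dvd_mul_right).mp h2

/-! theta -/

noncomputable def thf : ℕ → ZMod 3 := fun n =>
  if (Nat.sqrt n)^2 = n then (if n = 0 then 1 else 2 * (-1)^(Nat.sqrt n)) else 0

noncomputable def th : S3 := PowerSeries.mk thf

lemma wsgn_neg (k : ℤ) : wsgn (-k) = wsgn k := by
  simp [wsgn, even_neg]

lemma wsgn_natCast (s : ℕ) : wsgn (s:ℤ) = (-1)^s := by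
  rcases Nat.even_or_odd s with h | h
  · simp [wsgn, Int.even_coe_nat, h, h.neg_one_pow]
  · have : ¬ Even (s:ℤ) := by simp [Int.even_coe_nat, Nat.not_even_iff_odd.mpr h]
    simp [wsgn, this, h.neg_one_pow]

noncomputable def TS (N : ℕ) : S3 :=
  ∑ k ∈ Finset.Icc (-(N:ℤ)) (N:ℤ), C (R := ZMod 3) (wsgn k) * (X:S3)^(k.natAbs^2)

lemma sq_eq_nat (a b : ℕ) (h : a^2 = b^2) : a = b :=
  Nat.pow_left_injective (by norm_num) h

lemma GSQe_near (N : ℕ) : (X:S3)^(2*N+1) ∣ GS N * Qe N - TS N := by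
  rw [GS, TS, Finset.sum_mul, ← Finset.sum_sub_distrib]
  apply Finset.dvd_sum
  intro k hk
  have hmem := Finset.mem_Icc.mp hk
  have hka : k.natAbs ≤ N := by omega
  have e1 : ff N k * Qe N - C (R := ZMod 3) (wsgn k) * X^(k.natAbs^2)
      = C (R := ZMod 3) (wsgn k) * (X^(k.natAbs^2) * (Qe N * gbz (2*N) ((N:ℤ)+k) - 1)) := by
    rw [ff]; ring
  rw [e1]
  have hQ := Qgb_key N (2*N - ((N:ℤ)+k).toNat) (((N:ℤ)+k).toNat) (by omega)
  have hbz : ((((N:ℤ)+k).toNat : ℕ) : ℤ) = (N:ℤ)+k := Int.toNat_of_nonneg (by omega)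
  rw [hbz] at hQ
  have hmin : min (2*N - ((N:ℤ)+k).toNat) (((N:ℤ)+k).toNat) = N - k.natAbs := by omega
  rw [hmin] at hQ
  have h2 : (X:S3)^(2*N+1) ∣ X^(k.natAbs^2) * (Qe N * gbz (2*N) ((N:ℤ)+k) - 1) := by
    have hsq : 2*k.natAbs ≤ k.natAbs^2 + 1 := by
      have := two_mul_le_add_sq (k.natAbs) 1
      simpa using this
    calc (X:S3)^(2*N+1) ∣ X^(k.natAbs^2 + (2*(N - k.natAbs)+2)) := pow_dvd_pow _ (by omega)
      _ ∣ X^(k.natAbs^2) * (Qe N * gbz (2*N) ((N:ℤ)+k) - 1) := by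
          rw [pow_add]; exact mul_dvd_mul_left _ hQ
  exact h2.mul_left _

lemma TS_coeff (N j : ℕ) (hj : j ≤ 2*N) : coeff (R := ZMod 3) j (TS N) = thf j := by
  rw [TS, map_sum]
  simp only [coeff_C_mul, coeff_X_pow]
  by_cases hsq : (Nat.sqrt j)^2 = j
  · by_cases hj0 : j = 0
    · subst hj0
      rw [Finset.sum_eq_single 0]
      · simp [wsgn, thf]
      · intro k hk hne
        rw [if_neg, mul_zero]
        intro h
        have h2 : k.natAbs = 0 := sq_eq_nat k.natAbs 0 (by simpa using h.symm)
        exact hne (by omega)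
      · intro h
        exact absurd (Finset.mem_Icc.mpr ⟨by omega, by omega⟩) h
    · set s := Nat.sqrt j with hs
      have hss : s*s = j := by rw [← pow_two]; exact hsq
      have hs1 : 1 ≤ s := by
        rcases Nat.eq_zero_or_pos s with h | h
        · rw [h] at hss; omega
        · omega
      have hsN : s ≤ N := by
        by_contra hcon
        push_neg at hcon
        have h3 : (N+1)*(N+1) ≤ s*s := Nat.mul_le_mul hcon hcon
        nlinarith [hss, hj]
      have hsub : ({(s:ℤ), -(s:ℤ)} : Finset ℤ) ⊆ Finset.Icc (-(N:ℤ)) N := by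
        intro x hx
        simp only [Finset.mem_insert, Finset.mem_singleton] at hx
        rcases hx with h | h <;> subst h <;> exact Finset.mem_Icc.mpr ⟨by omega, by omega⟩
      rw [← Finset.sum_subset hsub]
      · rw [Finset.sum_pair (by omega : (s:ℤ) ≠ -(s:ℤ))]
        have h1 : ((s:ℤ)).natAbs = s := Int.natAbs_natCast s
        have h2 : ((-(s:ℤ))).natAbs = s := by simp
        rw [h1, h2, if_pos hsq.symm, wsgn_neg, wsgn_natCast]
        rw [thf]
        simp only [hs.symm] at *
        rw [if_pos hsq, if_neg hj0]
        ring
      · intro x hx hnx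
        rw [if_neg, mul_zero]
        intro h
        have hxs : x.natAbs = s := sq_eq_nat _ _ (by omega)
        have : x = (s:ℤ) ∨ x = -(s:ℤ) := by omega
        apply hnx
        simp only [Finset.mem_insert, Finset.mem_singleton]
        exact this
  · rw [thf]
    simp only [if_neg hsq]
    apply Finset.sum_eq_zero
    intro k hk
    rw [if_neg, mul_zero]
    intro h
    apply hsq
    rw [h, Nat.sqrt_eq']

lemma coeff_GSQe (N j : ℕ) (hj : j ≤ 2*N) :
    coeff (R := ZMod 3) j (GS N * Qe N) = thf j := by
  have h1 : coeff (R := ZMod 3) j (GS N * Qe N - TS N) = 0 :=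
    (PowerSeries.X_pow_dvd_iff.mp (GSQe_near N)) j (by omega)
  rw [map_sub, sub_eq_zero] at h1
  rw [h1, TS_coeff N j hj]

instance : Fact (Nat.Prime 3) := ⟨by norm_num⟩

lemma frob_id : frobenius (ZMod 3) 3 = RingHom.id (ZMod 3) :=
  RingHom.ext fun x => ZMod.pow_card x

/-- Frobenius for power series over ZMod 3, coefficientwise. -/
lemma cube_coeff (f : S3) (j : ℕ) :
    (coeff (R := ZMod 3) j) (f^3) = if 3 ∣ j then coeff (R := ZMod 3) (j/3) f else 0 := by
  set p : Polynomial (ZMod 3) := trunc (j+1) f with hp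
  have hco : ∀ m, m ≤ j → Polynomial.coeff p m = coeff (R := ZMod 3) m f := by
    intro m hm
    rw [hp, coeff_trunc]
    simp [Nat.lt_succ_of_le hm]
  have hdvd : (X:S3)^(j+1) ∣ f - ↑p := by
    rw [PowerSeries.X_pow_dvd_iff]
    intro m hm
    rw [map_sub, Polynomial.coeff_coe, hco m (by omega), sub_self]
  obtain ⟨g, hg⟩ := hdvd
  have hf3 : f^3 = (↑p:S3)^3 + X^(j+1) * (g * (f^2 + f*(↑p:S3) + (↑p:S3)^2)) := by
    have hf : f = (↑p:S3) + X^(j+1)*g := by linear_combination hg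
    rw [hf]; ring
  have hz : coeff (R := ZMod 3) j (X^(j+1) * (g * (f^2 + f*(↑p:S3) + (↑p:S3)^2))) = 0 :=
    (PowerSeries.X_pow_dvd_iff.mp (dvd_mul_right _ _)) j (by omega)
  rw [hf3, map_add, hz, add_zero]
  have hp3 : p^3 = Polynomial.expand (ZMod 3) 3 p := by
    have h := Polynomial.map_frobenius_expand 3 p
    rw [frob_id, Polynomial.map_id] at h
    exact h.symm
  rw [← Polynomial.coe_pow, hp3, Polynomial.coeff_coe,
    Polynomial.coeff_expand (by norm_num : 0 < 3)]
  split_ifs with h3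
  · exact hco (j/3) (by omega)
  · rfl

lemma coeff_mul_congr (f g g' : S3) (j : ℕ) (h : ∀ l ≤ j, coeff (R := ZMod 3) l g = coeff (R := ZMod 3) l g') :
    coeff (R := ZMod 3) j (f*g) = coeff (R := ZMod 3) j (f*g') := by
  rw [coeff_mul, coeff_mul]
  apply Finset.sum_congr rfl
  intro p hp
  have := Finset.HasAntidiagonal.mem_antidiagonal.mp hp
  rw [h p.2 (by omega)]

lemma coeff_contract (f g : S3) (m : ℕ) :
    coeff (R := ZMod 3) m ((PowerSeries.mk fun i => coeff (R := ZMod 3) (3*i) f) * g)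
      = coeff (R := ZMod 3) (3*m) (f * g^3) := by
  rw [coeff_mul, coeff_mul]
  have h1 : ∀ p ∈ antidiagonal (3*m),
      coeff (R := ZMod 3) p.1 f * coeff (R := ZMod 3) p.2 (g^3)
      = if 3 ∣ p.2 then coeff (R := ZMod 3) p.1 f * coeff (R := ZMod 3) (p.2/3) g else 0 := by
    intro p hp
    rw [cube_coeff]
    split_ifs with h
    · rfl
    · rw [mul_zero]
  rw [Finset.sum_congr rfl h1, ← Finset.sum_filter]
  refine Finset.sum_nbij' (fun p => (3*p.1, 3*p.2)) (fun q => (q.1/3, q.2/3)) ?_ ?_ ?_ ?_ ?_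
  · rintro ⟨p1, p2⟩ hp
    have := Finset.HasAntidiagonal.mem_antidiagonal.mp hp
    simp only [Finset.mem_filter, Finset.HasAntidiagonal.mem_antidiagonal] at this ⊢
    omega
  · rintro ⟨q1, q2⟩ hq
    simp only [Finset.mem_filter, Finset.HasAntidiagonal.mem_antidiagonal] at hq
    rw [Finset.HasAntidiagonal.mem_antidiagonal]
    dsimp only
    omega
  · rintro ⟨p1, p2⟩ hp
    have := Finset.HasAntidiagonal.mem_antidiagonal.mp hp
    simp only [Prod.mk.injEq]
    omega
  · rintro ⟨q1, q2⟩ hq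
    simp only [Finset.mem_filter, Finset.HasAntidiagonal.mem_antidiagonal] at hq
    simp only [Prod.mk.injEq]
    omega
  · rintro ⟨p1, p2⟩ hp
    simp only [coeff_mk, Nat.mul_div_cancel_left _ (by norm_num : (0:ℕ) < 3),
      if_pos (dvd_mul_right 3 p2)]

lemma cancel_unit (u g : S3) (hu : constantCoeff (R := ZMod 3) u = 1) (M : ℕ)
    (h : ∀ m ≤ M, coeff (R := ZMod 3) m (g*u) = 0) : ∀ m, m ≤ M → coeff (R := ZMod 3) m g = 0 := by
  intro m
  induction m using Nat.strong_induction_on with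
  | _ m ih =>
    intro hm
    have hc := h m hm
    rw [coeff_mul, Finset.sum_eq_single (m, 0)] at hc
    · rw [coeff_zero_eq_constantCoeff, hu, mul_one] at hc
      exact hc
    · intro p hp hne
      have hmem := Finset.HasAntidiagonal.mem_antidiagonal.mp hp
      have hlt : p.1 < m := by
        rcases Nat.eq_zero_or_pos p.2 with h2 | h2
        · exfalso; apply hne; have : p.1 = m := by omega
          exact Prod.ext this h2
        · omega
      rw [ih p.1 hlt (by omega), zero_mul]
    · intro hmem
      exact absurd (Finset.HasAntidiagonal.mem_antidiagonal.mpr (by omega)) hmem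

/-! theta number theory -/

lemma thf_zero : thf 0 = 1 := by simp [thf]

lemma pow_neg_one_three (t : ℕ) : ((-1 : ZMod 3))^(3*t) = (-1)^t := by
  rw [mul_comm, pow_mul]
  norm_num

lemma thf_nine (i : ℕ) : thf (9*i) = thf i := by
  by_cases hsq : (Nat.sqrt i)^2 = i
  · set t := Nat.sqrt i with ht
    have h9 : Nat.sqrt (9*i) = 3*t := by
      have : 9*i = (3*t)^2 := by rw [mul_pow, ← hsq]; ring
      rw [this, Nat.sqrt_eq']
    rw [thf, thf, h9, if_pos hsq]
    have h2 : (3*t)^2 = 9*i := by rw [mul_pow, ← hsq]; ring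
    rw [if_pos h2]
    by_cases hi0 : i = 0
    · simp [hi0]
    · rw [if_neg (by omega), if_neg hi0, pow_neg_one_three]
  · rw [thf, thf, if_neg hsq, if_neg]
    intro hcon
    apply hsq
    have h3 : 3 ∣ Nat.sqrt (9*i) := by
      have hp : (3:ℕ).Prime := by norm_num
      apply hp.dvd_of_dvd_pow (n := 2)
      rw [hcon]
      omega
    obtain ⟨t, ht⟩ := h3
    rw [ht] at hcon
    have hit : i = t^2 := by nlinarith [hcon]
    rw [hit, Nat.sqrt_eq']

lemma thf_three (m : ℕ) : thf (3*m) = if 3 ∣ m then thf (m/3) else 0 := by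
  by_cases hsq : (Nat.sqrt (3*m))^2 = 3*m
  · have h3 : 3 ∣ Nat.sqrt (3*m) := by
      have hp : (3:ℕ).Prime := by norm_num
      apply hp.dvd_of_dvd_pow (n := 2)
      rw [hsq]
      omega
    obtain ⟨t, ht⟩ := h3
    have h9 : (3*t)^2 = 3*m := by rw [← ht]; exact hsq
    have h9' : 9*t^2 = 3*m := by rw [← h9]; ring
    have hmt : m = 3*t^2 := by omega
    have hdvd : 3 ∣ m := ⟨t^2, hmt⟩
    rw [if_pos hdvd]
    have hm3 : m/3 = t^2 := by omega
    rw [hm3, thf, thf, if_pos hsq, Nat.sqrt_eq']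
    rw [if_pos rfl]
    by_cases ht0 : t = 0
    · have : m = 0 := by rw [hmt, ht0]; ring
      simp [this, ht0]
    · have htsq : t^2 ≠ 0 := pow_ne_zero 2 ht0
      have hm0 : 3*m ≠ 0 := by omega
      rw [if_neg hm0, if_neg htsq, ht, pow_neg_one_three]
  · rw [thf, if_neg hsq]
    split_ifs with h3
    · rw [thf, if_neg]
      intro hcon
      apply hsq
      obtain ⟨mm, hmm⟩ := h3
      have h1 : 3*m = (3 * Nat.sqrt (m/3))^2 := by
        have he : (3 * Nat.sqrt (m/3))^2 = 9 * ((Nat.sqrt (m/3))^2) := by ring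
        rw [he, hcon]
        omega
      have h4 : Nat.sqrt (3*m) = 3 * Nat.sqrt (m/3) := by rw [h1, Nat.sqrt_eq']
      rw [h4, h1]
    · rfl

lemma sq_mod3 (x y : ℕ) (h : 3 ∣ x^2 + y^2) : 3 ∣ x ∧ 3 ∣ y := by
  have key : ∀ u v : ZMod 3, u^2 + v^2 = 0 → u = 0 ∧ v = 0 := by decide
  have hc : ((x:ZMod 3))^2 + ((y:ZMod 3))^2 = 0 := by
    have := (ZMod.natCast_eq_zero_iff (x^2+y^2) 3).mpr h
    push_cast at this
    exact this
  obtain ⟨hx, hy⟩ := key _ _ hc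
  exact ⟨(ZMod.natCast_eq_zero_iff x 3).mp hx,
    (ZMod.natCast_eq_zero_iff y 3).mp hy⟩

lemma thf_supp {i : ℕ} (h : thf i ≠ 0) : (Nat.sqrt i)^2 = i := by
  by_contra hcon
  apply h
  rw [thf, if_neg hcon]

lemma theta_nine_self (n : ℕ) : coeff (R := ZMod 3) (9*n) (th^2) = coeff (R := ZMod 3) n (th^2) := by
  simp only [pow_two]
  rw [coeff_mul, coeff_mul]
  simp only [th, coeff_mk]
  rw [← Finset.sum_filter_of_ne (p := fun p => 9 ∣ p.1 ∧ 9 ∣ p.2)]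
  · refine Finset.sum_nbij' (fun q => (q.1/9, q.2/9)) (fun p => (9*p.1, 9*p.2)) ?_ ?_ ?_ ?_ ?_
    · rintro ⟨q1, q2⟩ hq
      simp only [Finset.mem_filter, Finset.HasAntidiagonal.mem_antidiagonal] at hq
      rw [Finset.HasAntidiagonal.mem_antidiagonal]
      dsimp only
      omega
    · rintro ⟨p1, p2⟩ hp
      have := Finset.HasAntidiagonal.mem_antidiagonal.mp hp
      simp only [Finset.mem_filter, Finset.HasAntidiagonal.mem_antidiagonal] at this ⊢
      omega
    · rintro ⟨q1, q2⟩ hq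
      simp only [Finset.mem_filter, Finset.HasAntidiagonal.mem_antidiagonal] at hq
      simp only [Prod.mk.injEq]
      omega
    · rintro ⟨p1, p2⟩ hp
      simp only [Prod.mk.injEq]
      omega
    · rintro ⟨q1, q2⟩ hq
      simp only [Finset.mem_filter, Finset.HasAntidiagonal.mem_antidiagonal] at hq
      obtain ⟨hsum, ⟨a, ha⟩, ⟨b, hb⟩⟩ := hq
      subst ha; subst hb
      simp only []
      rw [show 9*a/9 = a by omega, show 9*b/9 = b by omega, thf_nine, thf_nine]
  · intro p hp hne
    have hsum := Finset.HasAntidiagonal.mem_antidiagonal.mp hp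
    have h1 : thf p.1 ≠ 0 := fun h => hne (by rw [h, zero_mul])
    have h2 : thf p.2 ≠ 0 := fun h => hne (by rw [h, mul_zero])
    have hs1 := thf_supp h1
    have hs2 := thf_supp h2
    have h3 : 3 ∣ (Nat.sqrt p.1)^2 + (Nat.sqrt p.2)^2 := by
      rw [hs1, hs2, hsum]
      omega
    obtain ⟨hd1, hd2⟩ := sq_mod3 _ _ h3
    constructor
    · rw [← hs1]
      obtain ⟨c, hc⟩ := hd1
      rw [hc]
      exact ⟨c^2, by ring⟩
    · rw [← hs2]
      obtain ⟨c, hc⟩ := hd2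
      rw [hc]
      exact ⟨c^2, by ring⟩


lemma coeff_AoQe (N j : ℕ) (hj : j ≤ 2*N) :
    coeff (R := ZMod 3) j (Ao N ^ 2 * Qe N) = thf j := by
  rw [jtp1 N]
  exact coeff_GSQe N j hj

/-! the integer side -/

noncomputable def facZ (m : ℕ) : PowerSeries ℤ :=
  (PowerSeries.invOfUnit (1 - PowerSeries.X ^ (2 * m + 1)) 1) ^ 4 *
  (PowerSeries.invOfUnit (1 - PowerSeries.X ^ (2 * m + 2)) 1) ^ 2

noncomputable def fZ (N : ℕ) : PowerSeries ℤ := ∏ m ∈ Finset.range N, facZ m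

lemma colorPart_eq (M : ℕ) : colorPart 2 4 M = PowerSeries.coeff (R := ℤ) M (fZ (M+1)) := rfl

lemma ccoeff (d : ℕ) (hd : 0 < d) :
    constantCoeff (R := ℤ) (1 - X^d) = ((1 : ℤˣ) : ℤ) := by
  rw [map_sub, map_one]
  simp [constantCoeff_X, zero_pow hd.ne', Units.val_one]

lemma inv_mul_one (d : ℕ) (hd : 0 < d) :
    (1 - (X : PowerSeries ℤ)^d) * PowerSeries.invOfUnit (1 - X^d) 1 = 1 :=
  PowerSeries.mul_invOfUnit _ _ (ccoeff d hd)

noncomputable def pZ (N : ℕ) : PowerSeries ℤ :=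
  ∏ m ∈ Finset.range N, ((1 - (X : PowerSeries ℤ)^(2*m+1))^2 * (1 - X^(2*m+2)))

lemma fZ_pZ (N : ℕ) : fZ N * pZ N ^ 2 = 1 := by
  rw [fZ, pZ, ← Finset.prod_pow, ← Finset.prod_mul_distrib]
  apply Finset.prod_eq_one
  intro m _
  have h1 := inv_mul_one (2*m+1) (by omega)
  have h2 := inv_mul_one (2*m+2) (by omega)
  rw [facZ]
  calc PowerSeries.invOfUnit (1 - X ^ (2*m+1)) 1 ^ 4 * PowerSeries.invOfUnit (1 - X^(2*m+2)) 1 ^ 2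
        * ((1 - (X : PowerSeries ℤ)^(2*m+1))^2 * (1 - X^(2*m+2)))^2
      = ((1 - (X : PowerSeries ℤ)^(2*m+1)) * PowerSeries.invOfUnit (1 - X^(2*m+1)) 1)^4
        * ((1 - (X : PowerSeries ℤ)^(2*m+2)) * PowerSeries.invOfUnit (1 - X^(2*m+2)) 1)^2 := by
        ring
    _ = 1 := by rw [h1, h2]; norm_num

lemma inv_sub_one (d : ℕ) (hd : 0 < d) :
    (X : PowerSeries ℤ)^d ∣ PowerSeries.invOfUnit (1 - X^d) 1 - 1 := by
  refine ⟨PowerSeries.invOfUnit (1 - X^d) 1, ?_⟩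
  linear_combination inv_mul_one d hd

lemma facZ_sub_one (m : ℕ) : (X : PowerSeries ℤ)^(2*m+1) ∣ facZ m - 1 := by
  rw [facZ]
  apply dvd_mul_sub_one
  · exact dvd_pow_sub_one (inv_sub_one (2*m+1) (by omega)) 4
  · exact dvd_pow_sub_one
      ((pow_dvd_pow (X : PowerSeries ℤ) (by omega)).trans (inv_sub_one (2*m+2) (by omega))) 2

lemma fZ_stable (M N : ℕ) (h : M < N) :
    PowerSeries.coeff (R := ℤ) M (fZ N) = PowerSeries.coeff (R := ℤ) M (fZ (M+1)) := by
  obtain ⟨K, rfl⟩ : ∃ K, N = (M+1)+K := ⟨N-(M+1), by omega⟩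
  have hsplit : fZ ((M+1)+K) = fZ (M+1) * ∏ i ∈ Finset.range K, facZ ((M+1)+i) :=
    Finset.prod_range_add _ _ _
  have hd : (X : PowerSeries ℤ)^(M+1) ∣ (∏ i ∈ Finset.range K, facZ ((M+1)+i)) - 1 :=
    dvd_prod_sub_one _ _ _
      (fun i _ => (pow_dvd_pow (X : PowerSeries ℤ) (by omega)).trans (facZ_sub_one (M+1+i)))
  obtain ⟨g, hg⟩ := hd
  have h2 : fZ ((M+1)+K) = fZ (M+1) + X^(M+1) * (fZ (M+1) * g) := by
    rw [hsplit]
    linear_combination fZ (M+1) * hg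
  rw [h2, map_add]
  have h3 : PowerSeries.coeff (R := ℤ) M (X^(M+1) * (fZ (M+1) * g)) = 0 :=
    (PowerSeries.X_pow_dvd_iff.mp (dvd_mul_right _ _)) M (by omega)
  rw [h3, add_zero]

/-! mapping to ZMod 3 -/

noncomputable def F3 (N : ℕ) : S3 := PowerSeries.map (Int.castRingHom (ZMod 3)) (fZ N)

lemma map_pZ (N : ℕ) : PowerSeries.map (Int.castRingHom (ZMod 3)) (pZ N) = Ao N ^ 2 * Qe N := by
  rw [pZ, map_prod]
  rw [Ao, Qe, ← Finset.prod_pow, ← Finset.prod_mul_distrib]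
  apply Finset.prod_congr rfl
  intro m _
  rw [map_mul, map_pow, map_sub, map_one, map_pow, PowerSeries.map_X,
    map_sub, map_one, map_pow, PowerSeries.map_X]

lemma F3_rel (N : ℕ) : F3 N * (Ao N ^ 2 * Qe N) ^ 2 = 1 := by
  rw [← map_pZ, F3, ← map_pow, ← map_mul, fZ_pZ, map_one]

theorem stmt2 (n : ℕ) :
    colorPart 2 4 (27 * n) ≡ colorPart 2 4 (3 * n) [ZMOD 3] := by
  set N := 27*n+2 with hN
  have hcast : ∀ M, M < N → ((colorPart 2 4 M : ℤ) : ZMod 3) = coeff (R := ZMod 3) M (F3 N) := by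
    intro M hM
    rw [colorPart_eq, ← fZ_stable M N hM, F3, PowerSeries.coeff_map]
    rfl
  have hP : F3 N * (Ao N ^ 2 * Qe N)^3 = Ao N ^ 2 * Qe N := by
    linear_combination (Ao N ^ 2 * Qe N) * F3_rel N
  have hstep1 : ∀ j, j ≤ 2*N → coeff (R := ZMod 3) j (F3 N * th^3) = thf j := by
    intro j hj
    have h1 : coeff (R := ZMod 3) j (F3 N * (Ao N ^ 2 * Qe N)^3) = thf j := by
      rw [hP]
      exact coeff_AoQe N j hj
    rw [← h1]
    apply coeff_mul_congr
    intro l hl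
    rw [cube_coeff, cube_coeff]
    split_ifs with h3
    · rw [show coeff (R := ZMod 3) (l/3) th = thf (l/3) from coeff_mk _ _,
        coeff_AoQe N (l/3) (by omega)]
    · rfl
  have hstep2 : ∀ m, m ≤ 9*n+1 → coeff (R := ZMod 3) m
      ((PowerSeries.mk fun i => coeff (R := ZMod 3) (3*i) (F3 N)) * th) = coeff (R := ZMod 3) m (th^2 * th) := by
    intro m hm
    rw [coeff_contract (F3 N) th m, hstep1 (3*m) (by omega)]
    rw [show th^2*th = th^3 by ring, cube_coeff, thf_three]
    split_ifs with h3
    · rw [show coeff (R := ZMod 3) (m/3) th = thf (m/3) from coeff_mk _ _]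
    · rfl
  have hcancel : ∀ m, m ≤ 9*n+1 → coeff (R := ZMod 3) m
      (PowerSeries.mk fun i => coeff (R := ZMod 3) (3*i) (F3 N)) = coeff (R := ZMod 3) m (th^2) := by
    have h0 : ∀ m, m ≤ 9*n+1 → coeff (R := ZMod 3) m
        (((PowerSeries.mk fun i => coeff (R := ZMod 3) (3*i) (F3 N)) - th^2) * th) = 0 := by
      intro m hm
      rw [sub_mul, map_sub, hstep2 m hm, sub_self]
    intro m hm
    have hc := cancel_unit th _ (by rw [th, constantCoeff_mk, thf_zero]) (9*n+1)
      (fun m' hm' => h0 m' hm') m hm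
    rw [map_sub, sub_eq_zero] at hc
    exact hc
  have hfinal : coeff (R := ZMod 3) (27*n) (F3 N) = coeff (R := ZMod 3) (3*n) (F3 N) := by
    have h1 : coeff (R := ZMod 3) (27*n) (F3 N)
        = coeff (R := ZMod 3) (9*n) (PowerSeries.mk fun i => coeff (R := ZMod 3) (3*i) (F3 N)) := by
      rw [coeff_mk]
      congr 1
      ring
    have h2 : coeff (R := ZMod 3) (3*n) (F3 N)
        = coeff (R := ZMod 3) n (PowerSeries.mk fun i => coeff (R := ZMod 3) (3*i) (F3 N)) := by
      rw [coeff_mk]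
    rw [h1, h2, hcancel (9*n) (by omega), hcancel n (by omega), theta_nine_self]
  have e1 := hcast (27*n) (by omega)
  have e2 := hcast (3*n) (by omega)
  exact (ZMod.intCast_eq_intCast_iff _ _ _).mp (e1.trans (hfinal.trans e2.symm))
end

section
/- For all integers n ≥ 0 and all integers k ≥ j ≥ 0, a_{3(k-j)+5, 3k+1}(3n+2) ≡ 0 (mod 3). -/
namespace CPaux
open PowerSeries Finset

abbrev A : Type := PowerSeries (ZMod 3)

/-- distance on ℕ -/
def dd (a b : ℕ) : ℕ := (a - b) + (b - a)

lemma dd_sq_cast (a b : ℕ) : (((dd a b)^2 : ℕ) : ℤ) = ((a:ℤ) - b)^2 := by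
  rcases le_total a b with h | h
  · have : dd a b = b - a := by unfold dd; omega
    rw [this]; push_cast [h]; ring
  · have : dd a b = a - b := by unfold dd; omega
    rw [this]; push_cast [h]; ring

/-- Gaussian binomial `[N choose m]` in the variable `X^2`, defined by the
q-Pascal rule `[N+1 choose m] = X^(2m) [N choose m] + [N choose m-1]`. -/
noncomputable def gb : ℕ → ℕ → A
  | 0, 0 => 1
  | 0, _ + 1 => 0
  | N + 1, 0 => gb N 0
  | N + 1, m + 1 => X ^ (2 * (m+1)) * gb N (m+1) + gb N m

lemma gb_zero (N : ℕ) : gb N 0 = 1 := by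
  induction N with
  | zero => rfl
  | succ N ih => rw [gb, ih]

lemma gb_of_lt {N m : ℕ} (h : N < m) : gb N m = 0 := by
  induction N generalizing m with
  | zero => obtain ⟨m, rfl⟩ := Nat.exists_eq_add_of_lt h; rw [show 0 + m + 1 = m + 1 by omega, gb]
  | succ N ih =>
    obtain ⟨m', rfl⟩ : ∃ m', m = m' + 1 := ⟨m - 1, by omega⟩
    rw [gb, ih (by omega), ih (by omega), mul_zero, zero_add]

lemma gb_diag (N : ℕ) : gb N N = 1 := by
  induction N with
  | zero => rfl
  | succ N ih => rw [gb, gb_of_lt (by omega), ih, mul_zero, zero_add]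

noncomputable def poch (t : ℕ) : A := ∏ i ∈ range t, (1 - X ^ (2 * (i+1)))

lemma poch_succ (t : ℕ) : poch (t+1) = poch t * (1 - X ^ (2 * (t+1))) := by
  rw [poch, prod_range_succ]; rfl

/-- product formula: `poch m * poch (N-m) * gb N m = poch N` for `m ≤ N`. -/
lemma gb_poch : ∀ N m : ℕ, m ≤ N → poch m * poch (N - m) * gb N m = poch N := by
  intro N
  induction N with
  | zero => intro m hm; interval_cases m; simp [gb_zero, poch]
  | succ N ih =>
    intro m hm
    match m with
    | 0 => simp [gb_zero, poch]
    | m + 1 =>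
      rw [gb]
      rcases Nat.lt_or_ge m N with hmN | hmN
      · have h1 : N + 1 - (m+1) = (N - (m+1)) + 1 := by omega
        have h2 : 2 * (N - (m+1) + 1) = 2 * (N - m) := by omega
        rw [h1, poch_succ, poch_succ, h2]
        have e1 := ih (m+1) (by omega)
        have e2 := ih m (by omega)
        have e3 : 2 * (m + 1) + 2 * (N - m) = 2 * (N + 1) := by omega
        calc poch m * (1 - X ^ (2*(m+1))) * (poch (N - (m+1)) * (1 - X ^ (2*(N-m)))) *
              (X ^ (2*(m+1)) * gb N (m+1) + gb N m)
            = (poch (m+1) * poch (N - (m+1)) * gb N (m+1)) * (X ^ (2*(m+1)) * (1 - X ^ (2*(N-m))))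
              + (poch m * poch (N - m) * gb N m) * ((1 - X ^ (2*(m+1)))) := by
              rw [poch_succ, show N - m = (N - (m+1)) + 1 by omega, poch_succ, h2]; ring
          _ = poch N * (X ^ (2*(m+1)) * (1 - X ^ (2*(N-m))) + (1 - X ^ (2*(m+1)))) := by
              rw [e1, e2]; ring
          _ = poch N * (1 - X ^ (2 * (N+1))) := by
              rw [← e3, pow_add]; ring
          _ = poch (N+1) := (poch_succ N).symm
      · -- m ≥ N, so m = N (since m + 1 ≤ N + 1)
        have hm' : m = N := by omega
        subst hm'
        rw [gb_of_lt (by omega), gb_diag]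
        have : poch 0 = 1 := rfl
        simp [poch_succ, this]


lemma constCoeff_one_sub_pow (d : ℕ) (hd : d ≠ 0) :
    constantCoeff (R := ZMod 3) (1 - X ^ d) = 1 := by
  simp [map_sub, map_pow, constantCoeff_X, zero_pow hd]

lemma poch_ne_zero (t : ℕ) : poch t ≠ 0 := by
  intro h
  have h0 : constantCoeff (R := ZMod 3) (poch t) = 1 := by
    rw [poch, map_prod]
    apply Finset.prod_eq_one
    intro i _
    exact constCoeff_one_sub_pow _ (by omega)
  rw [h, map_zero] at h0
  exact one_ne_zero h0.symm

/-- the second q-Pascal rule, valid for all `N m`. -/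
lemma gb_P1 (N m : ℕ) : gb (N+1) (m+1) = gb N (m+1) + X ^ (2 * (N - m)) * gb N m := by
  rcases Nat.lt_trichotomy m N with hmN | rfl | hmN
  · have hP : poch (m+1) * poch (N - m) ≠ 0 :=
      mul_ne_zero (poch_ne_zero _) (poch_ne_zero _)
    apply mul_left_cancel₀ hP
    have hNm : N - m = (N - (m+1)) + 1 := by omega
    have hNm2 : 2 * (N - (m+1) + 1) = 2 * (N - m) := by omega
    have e1 : poch (m+1) * poch (N - (m+1)) * gb N (m+1) = poch N := gb_poch N (m+1) (by omega)
    have e2 : poch m * poch (N - m) * gb N m = poch N := gb_poch N m (by omega)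
    have e0 : poch (m+1) * poch ((N+1) - (m+1)) * gb (N+1) (m+1) = poch (N+1) :=
      gb_poch (N+1) (m+1) (by omega)
    have hsub : (N+1) - (m+1) = N - m := by omega
    rw [hsub] at e0
    calc poch (m+1) * poch (N - m) * gb (N+1) (m+1) = poch (N+1) := e0
      _ = poch N * (1 - X ^ (2 * (N+1))) := poch_succ N
      _ = poch N * ((1 - X ^ (2*(N-m))) + X ^ (2*(N-m)) * (1 - X ^ (2*(m+1)))) := by
          rw [show 2*(N+1) = 2*(N-m) + 2*(m+1) by omega, pow_add]; ring
      _ = poch (m+1) * poch (N - m) * (gb N (m+1) + X ^ (2 * (N - m)) * gb N m) := by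
          have hp : poch (N - m) = poch (N - (m+1)) * (1 - X ^ (2*(N - m))) := by
            rw [hNm, poch_succ, hNm2]
          have r1 : poch (m+1) * poch (N - m) * gb N (m+1) = poch N * (1 - X ^ (2*(N-m))) := by
            rw [hp, ← e1]; ring
          have r2 : poch (m+1) * poch (N - m) * (X ^ (2*(N-m)) * gb N m) =
              poch N * (X ^ (2*(N-m)) * (1 - X ^ (2*(m+1)))) := by
            have hq : poch (m+1) = poch m * (1 - X ^ (2*(m+1))) := poch_succ m
            rw [hq, ← e2]; ring
          linear_combination (-1 : A) * r1 - r2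
  · rw [gb_diag, gb_of_lt (by omega), gb_diag]
    simp
  · rw [gb_of_lt (by omega), gb_of_lt (by omega), gb_of_lt (by omega)]
    simp


lemma dd_sq_cast' (a b : ℕ) : ((dd a b : ℕ) : ℤ)^2 = ((a:ℤ) - b)^2 := by
  have := dd_sq_cast a b
  push_cast at this
  exact this

lemma key1 (n m : ℕ) : (dd m (n+1))^2 + 2*m = (dd m n)^2 + (2*n+1) := by
  zify
  rw [dd_sq_cast', dd_sq_cast']
  push_cast
  ring

lemma key2 (n m : ℕ) : dd (m+1) (n+1) = dd m n := by unfold dd; omega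

lemma key3 (n i : ℕ) (h : i ≤ 2*n) :
    2*(2*n - i) + (dd (i+2) (n+1))^2 = (2*n+1) + (dd i n)^2 := by
  zify [h]
  rw [dd_sq_cast', dd_sq_cast']
  push_cast
  ring

lemma gb_step1 (n : ℕ) : gb (2*n+2) 1 = X^2 * gb (2*n) 1 + (1 + X^(4*n+2)) := by
  show gb ((2*n+1)+1) (0+1) = _
  rw [gb, gb_P1, gb_zero, gb_zero]
  rw [show 4*n+2 = 2 + 2*(2*n - 0) by omega, pow_add]
  ring

lemma gb_step2 (n i : ℕ) (h : i ≤ 2*n) :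
    gb (2*n+2) (i+2) = X ^ (2*(i+2)) * gb (2*n) (i+2)
      + (1 + X ^ (4*n+2)) * gb (2*n) (i+1) + X ^ (2*(2*n - i)) * gb (2*n) i := by
  have h0 : gb (2*n+2) (i+2) = X ^ (2*(i+2)) * gb (2*n+1) (i+2) + gb (2*n+1) (i+1) := by
    show gb ((2*n+1)+1) ((i+1)+1) = _
    rw [gb]
  have h1 := gb_P1 (2*n) (i+1)
  have h2 := gb_P1 (2*n) i
  rcases le_or_gt (i+1) (2*n) with hc | hc
  · have he : (X:A) ^ (2*(i+2)) * X ^ (2*(2*n - (i+1))) = X ^ (4*n+2) := by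
      rw [← pow_add, show 2*(i+2) + 2*(2*n - (i+1)) = 4*n+2 by omega]
    rw [h0, h1, h2]
    linear_combination (gb (2*n) (i+1)) * he
  · have hi : i = 2*n := by omega
    subst hi
    rw [h0, h1, h2, gb_of_lt (show 2*n < 2*n+2 by omega),
      gb_of_lt (show 2*n < 2*n+1 by omega)]
    ring


/-- partial theta-like sum: `∑_{|m-t| ≤ t} (-1)^(t+m) [2t choose m] X^((m-t)^2)` -/
noncomputable def SS (t : ℕ) : A :=
  ∑ m ∈ Finset.range (2*t+1), (-1:A)^(t+m) * gb (2*t) m * X ^ ((dd m t)^2)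

lemma SS_succ (n : ℕ) : SS (n+1) = SS n * (1 - X^(2*n+1))^2 := by
  set g : ℕ → A := fun m => (-1:A)^(n+m) * gb (2*n) m * X ^ ((dd m n)^2) with hg
  have hSSn : SS n = ∑ m ∈ range (2*n+1), g m := rfl
  have htop1 : g (2*n+1) = 0 := by simp [hg, gb_of_lt (show 2*n < 2*n+1 by omega)]
  have htop2 : g (2*n+2) = 0 := by simp [hg, gb_of_lt (show 2*n < 2*n+2 by omega)]
  have hA : ∑ i ∈ range (2*n+1), g (i+2) = SS n - g 1 - g 0 := by
    have : ∑ m ∈ range (2*n+3), g m = SS n := by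
      rw [show (2*n+3) = (2*n+2)+1 from rfl, sum_range_succ,
        show (2*n+2) = (2*n+1)+1 from rfl, sum_range_succ, htop1, htop2, hSSn]
      ring
    rw [show (2*n+3) = (2*n+2)+1 from rfl, sum_range_succ',
      show (2*n+2) = (2*n+1)+1 from rfl, sum_range_succ'] at this
    rw [← this]; ring
  have hB : ∑ i ∈ range (2*n+1), g (i+1) = SS n - g 0 := by
    have : ∑ m ∈ range (2*n+2), g m = SS n := by
      rw [show (2*n+2) = (2*n+1)+1 from rfl, sum_range_succ, htop1, hSSn]
      ring
    rw [show (2*n+2) = (2*n+1)+1 from rfl, sum_range_succ'] at this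
    rw [← this]; ring
  have hterm : ∀ i ∈ range (2*n+1),
      (-1:A)^((n+1)+(i+1+1)) * gb (2*(n+1)) (i+1+1) * X ^ ((dd (i+1+1) (n+1))^2)
      = (-X^(2*n+1)) * g (i+2) + (1 + X^(4*n+2)) * g (i+1) + (-X^(2*n+1)) * g i := by
    intro i hi
    rw [mem_range] at hi
    have hi' : i ≤ 2*n := by omega
    have e1 : (X:A) ^ (2*(i+2)) * X ^ ((dd (i+2) (n+1))^2)
        = X ^ (2*n+1) * X ^ ((dd (i+2) n)^2) := by
      rw [← pow_add, ← pow_add, show 2*(i+2) + (dd (i+2) (n+1))^2 = (2*n+1) + (dd (i+2) n)^2 by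
        have := key1 n (i+2); omega]
    have e2 : dd (i+2) (n+1) = dd (i+1) n := key2 n (i+1)
    have e3 : (X:A) ^ (2*(2*n - i)) * X ^ ((dd (i+2) (n+1))^2)
        = X ^ (2*n+1) * X ^ ((dd i n)^2) := by
      rw [← pow_add, ← pow_add, key3 n i hi']
    have hstep := gb_step2 n i hi'
    show (-1:A)^((n+1)+(i+2)) * gb (2*n+2) (i+2) * X ^ ((dd (i+2) (n+1))^2) = _
    rw [hstep, hg]
    rw [e2] at e1 e3 ⊢
    linear_combination (-(-1:A)^(n+i) * gb (2*n) (i+2)) * e1 + (-(-1:A)^(n+i) * gb (2*n) i) * e3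
  have expand : SS (n+1)
      = (∑ i ∈ range (2*n+1),
          (-1:A)^((n+1)+(i+1+1)) * gb (2*(n+1)) (i+1+1) * X ^ ((dd (i+1+1) (n+1))^2))
        + (-1:A)^((n+1)+1) * gb (2*(n+1)) 1 * X ^ ((dd 1 (n+1))^2)
        + (-1:A)^((n+1)+0) * gb (2*(n+1)) 0 * X ^ ((dd 0 (n+1))^2) := by
    rw [SS, show (2*(n+1)+1) = (2*(n+1))+1 from rfl, sum_range_succ',
      show (2*(n+1)) = (2*n+1)+1 from rfl, sum_range_succ']
  rw [expand, Finset.sum_congr rfl hterm]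
  rw [Finset.sum_add_distrib, Finset.sum_add_distrib, ← Finset.mul_sum, ← Finset.mul_sum,
    ← Finset.mul_sum, hA, hB, ← hSSn]
  -- boundary values
  have hdd0 : dd 0 (n+1) = n+1 := by unfold dd; omega
  have hdd1 : dd 1 (n+1) = n := by unfold dd; omega
  have hdd0n : dd 0 n = n := by unfold dd; omega
  have hx1 : (X:A) ^ (2*n+1) * X ^ ((dd 1 n)^2) = X^2 * X ^ (n^2) := by
    rw [← pow_add, ← pow_add]
    congr 1
    have h1 := key1 n 1
    rw [hdd1] at h1
    omega
  have hx2 : (X:A) ^ ((n+1)^2) = X ^ (2*n+1) * X ^ (n^2) := by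
    rw [← pow_add]
    congr 1
    ring
  rw [show 2*(n+1) = 2*n+2 by omega, gb_step1 n, hdd1, hdd0]
  simp only [hg, hdd0n, gb_zero]
  linear_combination (-(-1:A)^n * gb (2*n) 1) * hx1 + (-(-1:A)^n) * hx2


/-- finite Jacobi triple product specialization. -/
theorem FF (n : ℕ) : ∏ j ∈ Finset.range n, (1 - X^(2*j+1))^2 = SS n := by
  induction n with
  | zero =>
    rw [SS]
    simp [dd, gb_zero]
  | succ n ih => rw [prod_range_succ, ih, SS_succ]

noncomputable def pr (a b : ℕ) : A := ∏ i ∈ Finset.Ico a b, (1 - X ^ (2 * (i+1)))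

lemma poch_eq_pr (t : ℕ) : poch t = pr 0 t := by
  rw [poch, pr, Finset.range_eq_Ico]

lemma pr_mul (a b c : ℕ) (hab : a ≤ b) (hbc : b ≤ c) : pr a b * pr b c = pr a c :=
  Finset.prod_Ico_consecutive _ hab hbc

/-- tails of `poch` are `1 + X^(2(a+1)) * h`. -/
lemma pr_tail (a : ℕ) : ∀ b : ℕ, ∃ h : A, pr a b = 1 + X ^ (2*(a+1)) * h := by
  intro b
  induction b with
  | zero => exact ⟨0, by simp [pr]⟩
  | succ b ih =>
    obtain ⟨h, hh⟩ := ih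
    rcases le_or_gt (b+1) a with hba | hba
    · exact ⟨0, by simp [pr, Finset.Ico_eq_empty_of_le hba]⟩
    · have hsplit : pr a (b+1) = pr a b * (1 - X ^ (2*(b+1))) := by
        rw [pr, pr, Finset.prod_Ico_succ_top (by omega)]
      have hxb : (X:A) ^ (2*(b+1)) = X ^ (2*(a+1)) * X ^ (2*(b+1) - 2*(a+1)) := by
        rw [← pow_add]
        congr 1
        omega
      refine ⟨h * (1 - X ^ (2*(b+1))) - X ^ (2*(b+1) - 2*(a+1)), ?_⟩
      rw [hsplit, hh]
      rw [mul_sub, mul_sub, ← hxb]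
      ring

/-- the crucial approximation: `poch M * gb (2M) m = 1 + X^(2(M - dd m M)+2) * h`. -/
lemma poch_gb_tail (M m : ℕ) (hm : m ≤ 2*M) :
    ∃ h : A, poch M * gb (2*M) m = 1 + X ^ (2*(M - dd m M) + 2) * h := by
  have hP : poch m * poch (2*M - m) ≠ 0 := mul_ne_zero (poch_ne_zero _) (poch_ne_zero _)
  rcases le_or_gt m M with hmM | hmM
  · -- poch M * gb (2M) m = pr (2M - m) (2M) * pr m M
    have key : poch M * gb (2*M) m = pr (2*M - m) (2*M) * pr m M := by
      apply mul_left_cancel₀ hP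
      have e0 : poch m * poch (2*M - m) * gb (2*M) m = poch (2*M) := gb_poch (2*M) m hm
      calc poch m * poch (2*M - m) * (poch M * gb (2*M) m)
          = poch M * (poch m * poch (2*M - m) * gb (2*M) m) := by ring
        _ = poch M * poch (2*M) := by rw [e0]
        _ = poch m * poch (2*M - m) * (pr (2*M - m) (2*M) * pr m M) := by
            rw [poch_eq_pr M, poch_eq_pr (2*M), poch_eq_pr m, poch_eq_pr (2*M - m)]
            have A1 : pr 0 (2*M - m) * pr (2*M - m) (2*M) = pr 0 (2*M) :=
              pr_mul 0 (2*M - m) (2*M) (by omega) (by omega)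
            have A2 : pr 0 m * pr m M = pr 0 M := pr_mul 0 m M (by omega) hmM
            rw [← A1, ← A2]
            ring
    obtain ⟨h1, hh1⟩ := pr_tail (2*M - m) (2*M)
    obtain ⟨h2, hh2⟩ := pr_tail m M
    have hdd : dd m M = M - m := by unfold dd; omega
    have hxsplit : (X:A) ^ (2*(2*M - m + 1)) = X ^ (2*(M - dd m M) + 2) * X ^ (2*(2*M - m + 1) - (2*(M - dd m M) + 2)) := by
      rw [← pow_add]
      congr 1
      omega
    have hm2 : 2*(m+1) = 2*(M - dd m M) + 2 := by omega
    refine ⟨X ^ (2*(2*M - m + 1) - (2*(M - dd m M) + 2)) * (1 + X ^ (2*(m+1)) * h2) * h1 + h2, ?_⟩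
    rw [key, hh1, hh2, hxsplit, hm2]
    ring
  · -- m > M :  poch M * gb (2M) m = pr m (2M) * pr (2M - m) M
    have key : poch M * gb (2*M) m = pr m (2*M) * pr (2*M - m) M := by
      apply mul_left_cancel₀ hP
      have e0 : poch m * poch (2*M - m) * gb (2*M) m = poch (2*M) := gb_poch (2*M) m hm
      calc poch m * poch (2*M - m) * (poch M * gb (2*M) m)
          = poch M * (poch m * poch (2*M - m) * gb (2*M) m) := by ring
        _ = poch M * poch (2*M) := by rw [e0]
        _ = poch m * poch (2*M - m) * (pr m (2*M) * pr (2*M - m) M) := by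
            rw [poch_eq_pr M, poch_eq_pr (2*M), poch_eq_pr m, poch_eq_pr (2*M - m)]
            have A1 : pr 0 m * pr m (2*M) = pr 0 (2*M) := pr_mul 0 m (2*M) (by omega) hm
            have A2 : pr 0 (2*M - m) * pr (2*M - m) M = pr 0 M :=
              pr_mul 0 (2*M - m) M (by omega) (by omega)
            rw [← A1, ← A2]
            ring
    obtain ⟨h1, hh1⟩ := pr_tail m (2*M)
    obtain ⟨h2, hh2⟩ := pr_tail (2*M - m) M
    have hdd : dd m M = m - M := by unfold dd; omega
    have hxsplit : (X:A) ^ (2*(m + 1)) = X ^ (2*(M - dd m M) + 2) * X ^ (2*(m + 1) - (2*(M - dd m M) + 2)) := by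
      rw [← pow_add]
      congr 1
      omega
    have hm2 : 2*(2*M - m + 1) = 2*(M - dd m M) + 2 := by omega
    refine ⟨X ^ (2*(m + 1) - (2*(M - dd m M) + 2)) * (1 + X ^ (2*(2*M - m+1)) * h2) * h1 + h2, ?_⟩
    rw [key, hh1, hh2, hxsplit, hm2]
    ring


lemma sq_mod3 (t : ℕ) : t^2 % 3 ≠ 2 := by
  have h : t % 3 = 0 ∨ t % 3 = 1 ∨ t % 3 = 2 := by omega
  rcases h with h|h|h <;> rw [Nat.pow_mod, h] <;> decide

/-- THE CORE: coefficients at positions ≡ 2 (mod 3) of `∏ (1-X^(2m+1))^2 (1-X^(2m+2))`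
vanish. -/
lemma core (M b : ℕ) (hb3 : b % 3 = 2) (hbM : b ≤ 2*M) :
    (PowerSeries.coeff (R := ZMod 3) b)
      (∏ m ∈ Finset.range M, ((1 - X^(2*m+1))^2 * (1 - X^(2*m+2)))) = 0 := by
  have hpoch : (∏ m ∈ Finset.range M, (1 - (X:A)^(2*m+2))) = poch M := by
    rw [poch]
    apply Finset.prod_congr rfl
    intro i _
    rw [show 2*i+2 = 2*(i+1) by ring]
  have hprod : (∏ m ∈ Finset.range M, ((1 - (X:A)^(2*m+1))^2 * (1 - X^(2*m+2))))
      = SS M * poch M := by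
    rw [Finset.prod_mul_distrib, FF M, hpoch]
  rw [hprod, SS, Finset.sum_mul, map_sum]
  apply Finset.sum_eq_zero
  intro m hm
  rw [Finset.mem_range] at hm
  have hm' : m ≤ 2*M := by omega
  obtain ⟨h, hh⟩ := poch_gb_tail M m hm'
  set t := dd m M with ht
  have htM : t ≤ M := by rw [ht]; unfold dd; omega
  have hC : ((-1:A))^(M+m) = C (R := ZMod 3) ((-1)^(M+m)) := by
    rw [map_pow, map_neg, map_one]
  have hterm : (-1:A)^(M+m) * gb (2*M) m * X ^ (t^2) * poch M
      = C (R := ZMod 3) ((-1)^(M+m)) *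
          (X ^ (t^2) + X ^ (t^2 + (2*(M-t)+2)) * h) := by
    rw [← hC, pow_add]
    linear_combination ((-1:A)^(M+m) * X ^ (t^2)) * hh
  rw [hterm, coeff_C_mul, map_add]
  have h1 : (coeff (R := ZMod 3) b) ((X:A) ^ (t^2)) = 0 := by
    rw [coeff_X_pow, if_neg]
    intro heq
    exact sq_mod3 t (heq ▸ hb3)
  have h2 : (coeff (R := ZMod 3) b) ((X:A) ^ (t^2 + (2*(M-t)+2)) * h) = 0 := by
    rw [coeff_X_pow_mul', if_neg]
    intro hle
    have hb' : (b:ℤ) ≤ 2*M := by exact_mod_cast hbM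
    have htM' : (t:ℤ) ≤ M := by exact_mod_cast htM
    have hle' : (t:ℤ)^2 + (2*(M-t)+2) ≤ b := by
      have : ((t^2 + (2*(M-t)+2) : ℕ) : ℤ) ≤ (b:ℤ) := by exact_mod_cast hle
      push_cast [Nat.cast_sub htM] at this
      linarith
    nlinarith [sq_nonneg ((t:ℤ) - 1)]
  rw [h1, h2, add_zero, mul_zero]

/-- supported on exponents divisible by 3 -/
def tri (f : A) : Prop := ∀ i : ℕ, i % 3 ≠ 0 → PowerSeries.coeff (R := ZMod 3) i f = 0

lemma tri_one : tri 1 := by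
  intro i hi
  rw [coeff_one, if_neg (by omega)]

lemma tri_one_sub (d : ℕ) : tri (1 - X^(3*d)) := by
  intro i hi
  rw [map_sub, coeff_one, coeff_X_pow, if_neg (by omega), if_neg (by omega), sub_zero]

lemma tri_mul {f g : A} (hf : tri f) (hg : tri g) : tri (f * g) := by
  intro i hi
  rw [coeff_mul]
  apply Finset.sum_eq_zero
  intro p hp
  rw [Finset.HasAntidiagonal.mem_antidiagonal] at hp
  rcases Nat.eq_zero_or_pos (p.1 % 3) with h1 | h1
  · have h2 : p.2 % 3 ≠ 0 := by omega
    rw [hg p.2 h2, mul_zero]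
  · rw [hf p.1 (by omega), zero_mul]

lemma tri_pow {f : A} (hf : tri f) (e : ℕ) : tri (f ^ e) := by
  induction e with
  | zero => simpa using tri_one
  | succ e ih => rw [pow_succ]; exact tri_mul ih hf

lemma tri_prod {ι : Type} (s : Finset ι) (F : ι → A) (h : ∀ i ∈ s, tri (F i)) :
    tri (∏ i ∈ s, F i) :=
  Finset.prod_induction F tri (fun _ _ => tri_mul) tri_one h

lemma tri_of_inv {f g : A} (hfg : f * g = 1) (hf0 : constantCoeff (R := ZMod 3) f = 1)
    (hf : tri f) : tri g := by
  intro i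
  induction i using Nat.strong_induction_on with
  | _ i ih =>
    intro hi
    have h0 : PowerSeries.coeff (R := ZMod 3) i (f * g) = 0 := by
      rw [hfg, coeff_one, if_neg (by omega)]
    rw [coeff_mul] at h0
    rw [Finset.sum_eq_single_of_mem (0, i) (Finset.HasAntidiagonal.mem_antidiagonal.mpr (by omega))] at h0
    · rw [← coeff_zero_eq_constantCoeff] at hf0
      rw [hf0, one_mul] at h0
      exact h0
    · rintro ⟨a, b⟩ hab hne
      rw [Finset.HasAntidiagonal.mem_antidiagonal] at hab
      rcases Nat.eq_zero_or_pos (a % 3) with h1 | h1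
      · have ha : a ≠ 0 := by
          rintro rfl
          exact hne (by simpa using hab)
        have h2 : b % 3 ≠ 0 := by omega
        rw [ih b (by omega) h2, mul_zero]
      · rw [hf a (by omega), zero_mul]

lemma three_eq_zero : (3 : A) = 0 := by
  have h1 : (3:A) = C (R := ZMod 3) 3 := (map_ofNat (C (R := ZMod 3)) 3).symm
  rw [h1, show (3 : ZMod 3) = 0 by decide, map_zero]

lemma cube (d : ℕ) : ((1:A) - X^d)^3 = 1 - X^(3*d) := by
  have h : ((1:A) - X^d)^3 = 1 - (X^d)^3 - (3:A)*(X^d) + (3:A)*(X^d)^2 + 3*((X^d)^2 - (X^d)^2) := by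
    ring
  rw [h, three_eq_zero, ← pow_mul, show d*3 = 3*d by ring]
  ring

lemma map_one_sub_X_pow (d : ℕ) :
    PowerSeries.map (Int.castRingHom (ZMod 3)) ((1 : PowerSeries ℤ) - X^d) = 1 - X^d := by
  rw [map_sub, map_one, map_pow, PowerSeries.map_X]

lemma inv_pair (d : ℕ) (hd : d ≠ 0) :
    ((1:A) - X^d) *
      PowerSeries.map (Int.castRingHom (ZMod 3))
        (PowerSeries.invOfUnit ((1 : PowerSeries ℤ) - X^d) 1) = 1 := by
  have hc : constantCoeff (R := ℤ) ((1:PowerSeries ℤ) - X^d) = 1 := by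
    rw [map_sub, map_one, map_pow, constantCoeff_X, zero_pow hd, sub_zero]
  have h1 : ((1 : PowerSeries ℤ) - X^d) * PowerSeries.invOfUnit ((1 : PowerSeries ℤ) - X^d) 1 = 1 :=
    PowerSeries.mul_invOfUnit _ 1 (by rw [hc, Units.val_one])
  have h2 := congrArg (PowerSeries.map (Int.castRingHom (ZMod 3))) h1
  rw [map_mul, map_one, map_one_sub_X_pow] at h2
  exact h2

lemma main (n j k : ℕ) :
    PowerSeries.coeff (R := ZMod 3) (3*n+2)
      (PowerSeries.map (Int.castRingHom (ZMod 3))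
        (∏ m ∈ Finset.range (3*n+3),
          (PowerSeries.invOfUnit ((1 : PowerSeries ℤ) - X ^ (2*m+1)) 1) ^ (3*k+1) *
          (PowerSeries.invOfUnit ((1 : PowerSeries ℤ) - X ^ (2*m+2)) 1) ^ (3*(k-j)+5))) = 0 := by
  set M : ℕ := 3*n+3 with hM
  set G : A := PowerSeries.map (Int.castRingHom (ZMod 3))
      (∏ m ∈ Finset.range M,
        (PowerSeries.invOfUnit ((1 : PowerSeries ℤ) - X ^ (2*m+1)) 1) ^ (3*k+1) *
        (PowerSeries.invOfUnit ((1 : PowerSeries ℤ) - X ^ (2*m+2)) 1) ^ (3*(k-j)+5)) with hG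
  set U : A := ∏ m ∈ Finset.range M,
      ((1 - X^(2*m+1))^(3*k+1) * (1 - X^(2*m+2))^(3*(k-j)+5)) with hU
  set W : A := ∏ m ∈ Finset.range M,
      ((1 - X^(3*(2*m+1)))^k * (1 - X^(3*(2*m+2)))^(k-j+1)) with hW
  set V3 : A := ∏ m ∈ Finset.range M,
      ((1 - X^(3*(2*m+1))) * (1 - X^(3*(2*m+2)))^2) with hV3
  set V3e : A := ∏ m ∈ Finset.range M, (1 - X^(3*(2*m+2))) with hV3e
  set Ep : A := ∏ m ∈ Finset.range M,
      ((1 - X^(2*m+1))^2 * (1 - X^(2*m+2))) with hEp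
  -- U * G = 1
  have hUG : U * G = 1 := by
    rw [hU, hG, map_prod, ← Finset.prod_mul_distrib]
    apply Finset.prod_eq_one
    intro m _
    rw [map_mul, map_pow, map_pow]
    have ho := inv_pair (2*m+1) (by omega)
    have he := inv_pair (2*m+2) (by omega)
    rw [mul_mul_mul_comm, ← mul_pow, ← mul_pow, ho, he, one_pow, one_pow, one_mul]
  -- U * (V3e * Ep) = W * V3
  have hWV3 : U * (V3e * Ep) = W * V3 := by
    rw [hU, hW, hV3, hV3e, hEp, ← Finset.prod_mul_distrib, ← Finset.prod_mul_distrib,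
      ← Finset.prod_mul_distrib]
    apply Finset.prod_congr rfl
    intro m _
    rw [← cube (2*m+1), ← cube (2*m+2)]
    generalize (1 - (X:A)^(2*m+1)) = a
    generalize (1 - (X:A)^(2*m+2)) = b
    ring
  -- constant coefficients
  have hcW : constantCoeff (R := ZMod 3) W = 1 := by
    rw [hW, map_prod]
    apply Finset.prod_eq_one
    intro m _
    rw [map_mul, map_pow, map_pow, constCoeff_one_sub_pow _ (by omega),
      constCoeff_one_sub_pow _ (by omega), one_pow, one_pow, one_mul]
  have hcV3 : constantCoeff (R := ZMod 3) V3 = 1 := by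
    rw [hV3, map_prod]
    apply Finset.prod_eq_one
    intro m _
    rw [map_mul, map_pow, constCoeff_one_sub_pow _ (by omega),
      constCoeff_one_sub_pow _ (by omega), one_pow, one_mul]
  have hWi : W * PowerSeries.invOfUnit W 1 = 1 :=
    PowerSeries.mul_invOfUnit _ 1 (by rw [hcW, Units.val_one])
  have hV3i : V3 * PowerSeries.invOfUnit V3 1 = 1 :=
    PowerSeries.mul_invOfUnit _ 1 (by rw [hcV3, Units.val_one])
  -- tri facts
  have htW : tri W :=
    tri_prod _ _ (fun m _ => tri_mul (tri_pow (tri_one_sub _) k) (tri_pow (tri_one_sub _) (k-j+1)))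
  have htV3 : tri V3 :=
    tri_prod _ _ (fun m _ => tri_mul (tri_one_sub _) (tri_pow (tri_one_sub _) 2))
  have htV3e : tri V3e := tri_prod _ _ (fun m _ => tri_one_sub _)
  have htWi : tri (PowerSeries.invOfUnit W 1) := tri_of_inv hWi hcW htW
  have htV3i : tri (PowerSeries.invOfUnit V3 1) := tri_of_inv hV3i hcV3 htV3
  have htT : tri (PowerSeries.invOfUnit W 1 * PowerSeries.invOfUnit V3 1 * V3e) :=
    tri_mul (tri_mul htWi htV3i) htV3e
  -- U * g = 1
  set g : A := PowerSeries.invOfUnit W 1 * PowerSeries.invOfUnit V3 1 * (V3e * Ep) with hg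
  have hUg : U * g = 1 := by
    have h1 : U * g = (U * (V3e * Ep)) * PowerSeries.invOfUnit W 1 * PowerSeries.invOfUnit V3 1 := by
      rw [hg]; ring
    rw [h1, hWV3, show W * V3 * PowerSeries.invOfUnit W 1 * PowerSeries.invOfUnit V3 1
        = (W * PowerSeries.invOfUnit W 1) * (V3 * PowerSeries.invOfUnit V3 1) by ring,
      hWi, hV3i, one_mul]
  -- G = g
  have hGg : G = g := by
    calc G = G * (U * g) := by rw [hUg, mul_one]
      _ = (U * G) * g := by ring
      _ = g := by rw [hUG, one_mul]
  rw [hGg, hg, show PowerSeries.invOfUnit W 1 * PowerSeries.invOfUnit V3 1 * (V3e * Ep)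
      = (PowerSeries.invOfUnit W 1 * PowerSeries.invOfUnit V3 1 * V3e) * Ep by ring,
    coeff_mul]
  apply Finset.sum_eq_zero
  intro p hp
  rw [Finset.HasAntidiagonal.mem_antidiagonal] at hp
  rcases Nat.eq_zero_or_pos (p.1 % 3) with h1 | h1
  · have hb3 : p.2 % 3 = 2 := by omega
    have hb2 : p.2 ≤ 2*M := by omega
    rw [hEp, core M p.2 hb3 hb2, mul_zero]
  · rw [htT p.1 (by omega), zero_mul]

end CPaux

theorem stmt4 (n j k : ℕ) (hjk : j ≤ k) :
    colorPart (3 * (k - j) + 5) (3 * k + 1) (3 * n + 2) ≡ 0 [ZMOD 3] := by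
  have h := CPaux.main n j k
  rw [show 3*n+3 = 3*n+2+1 by omega] at h
  have hcast : ((colorPart (3*(k-j)+5) (3*k+1) (3*n+2) : ℤ) : ZMod 3) = 0 := by
    rw [colorPart]
    show (Int.castRingHom (ZMod 3)) (PowerSeries.coeff (R := ℤ) (3*n+2) _) = 0
    rw [← PowerSeries.coeff_map]
    exact h
  exact Int.modEq_zero_iff_dvd.mpr ((ZMod.intCast_zmod_eq_zero_iff_dvd _ 3).mp hcast)
end

section
/- Let p ≥ 5 be a prime and let r be an integer with 1 ≤ r ≤ p-1 such that 4r+1 is a quadratic non-residue modulo p. Then for all integers n ≥ 0 and all integers k ≥ j ≥ 0, a_{p(k-j)+(p-3), pk+p}(pn+r) ≡ 0 (mod p). -/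
open PowerSeries Finset

section Basics
variable {R : Type*} [CommRing R]

noncomputable def geom (R : Type*) [CommRing R] (d : ℕ) : PowerSeries R :=
  PowerSeries.mk fun i => if d ∣ i then 1 else 0

lemma coeff_geom (d i : ℕ) : (coeff (R := R) i) (geom R d) = if d ∣ i then 1 else 0 :=
  coeff_mk _ _

lemma geom_mul (d : ℕ) (hd : d ≠ 0) : geom R d * (1 - X ^ d) = 1 := by
  ext i
  rw [mul_sub, mul_one, map_sub, coeff_mul_X_pow', coeff_geom, coeff_one]
  by_cases h : d ≤ i
  · rw [if_pos h, coeff_geom]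
    have hiff : d ∣ i ↔ d ∣ i - d := by
      constructor
      · exact fun h' => Nat.dvd_sub h' dvd_rfl
      · intro h'
        have := Nat.dvd_add h' (dvd_refl d)
        rwa [Nat.sub_add_cancel h] at this
    rw [if_neg (show ¬ i = 0 by omega)]
    by_cases hdi : d ∣ i
    · rw [if_pos hdi, if_pos (hiff.1 hdi), sub_self]
    · rw [if_neg hdi, if_neg (fun hc => hdi (hiff.2 hc)), sub_self]
  · rw [if_neg h, sub_zero]
    rcases Nat.eq_zero_or_pos i with rfl | hi
    · simp
    · rw [if_neg (fun hdvd => h (Nat.le_of_dvd hi hdvd)), if_neg (by omega)]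

lemma mul_geom (d : ℕ) (hd : d ≠ 0) : (1 - X ^ d) * geom R d = 1 := by
  rw [mul_comm]; exact geom_mul d hd

/-- cancellation helper -/
lemma cancel_of_geom {d : ℕ} (hd : d ≠ 0) {u v : PowerSeries R}
    (h : u * (1 - X ^ d) = v * (1 - X ^ d)) : u = v := by
  have := congrArg (· * geom R d) h
  simpa [mul_assoc, mul_geom d hd] using this

/-- `Q n = ∏_{m<n} (1 - X^{2m+2})` -/
noncomputable def QQ (R : Type*) [CommRing R] (n : ℕ) : PowerSeries R :=
  ∏ m ∈ range n, (1 - X ^ (2 * m + 2))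

noncomputable def QQi (R : Type*) [CommRing R] (n : ℕ) : PowerSeries R :=
  ∏ m ∈ range n, geom R (2 * m + 2)

lemma QQ_mul_QQi (n : ℕ) : QQ R n * QQi R n = 1 := by
  rw [QQ, QQi, ← Finset.prod_mul_distrib]
  exact Finset.prod_eq_one fun m _ => mul_geom _ (by omega)

lemma QQi_mul_QQ (n : ℕ) : QQi R n * QQ R n = 1 := by
  rw [mul_comm]; exact QQ_mul_QQi n

lemma QQ_succ (n : ℕ) : QQ R (n + 1) = QQ R n * (1 - X ^ (2 * n + 2)) :=
  Finset.prod_range_succ _ _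

/-- Gaussian-binomial-like series `Gb a b = ∏_{i=b}^{a-1}(1-X^{2i+2}) / ∏_{i<a-b}(1-X^{2i+2})`. -/
noncomputable def Gb (R : Type*) [CommRing R] (a b : ℕ) : PowerSeries R :=
  if b ≤ a then (∏ i ∈ Ico b a, (1 - X ^ (2 * i + 2))) * QQi R (a - b) else 0

lemma Gb_mul_QQ {a b : ℕ} (h : b ≤ a) :
    Gb R a b * QQ R (a - b) = ∏ i ∈ Ico b a, (1 - X ^ (2 * i + 2)) := by
  rw [Gb, if_pos h, mul_assoc, QQi_mul_QQ, mul_one]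

lemma Gb_of_gt {a b : ℕ} (h : a < b) : Gb R a b = 0 := by
  rw [Gb, if_neg (by omega)]

lemma Gb_self (a : ℕ) : Gb R a a = 1 := by
  rw [Gb, if_pos le_rfl, Nat.sub_self]
  simp [QQi]

lemma Gb_zero (a : ℕ) : Gb R a 0 = 1 := by
  rw [Gb, if_pos (Nat.zero_le a), Nat.sub_zero]
  rw [← Finset.range_eq_Ico]
  exact QQ_mul_QQi a

end Basics

section OneUpTo
variable {R : Type*} [CommRing R]

/-- `f` agrees with `1` in all coefficients below `c`. -/
def oneUpTo (c : ℕ) (f : PowerSeries R) : Prop :=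
  ∀ i, i < c → (PowerSeries.coeff (R := R) i) f = if i = 0 then 1 else 0

lemma oneUpTo_one (c : ℕ) : oneUpTo c (1 : PowerSeries R) := by
  intro i _
  rw [PowerSeries.coeff_one]

lemma oneUpTo_mono {c c' : ℕ} (h : c' ≤ c) {f : PowerSeries R} (hf : oneUpTo c f) :
    oneUpTo c' f := fun i hi => hf i (lt_of_lt_of_le hi h)

lemma oneUpTo_mul {c : ℕ} {f g : PowerSeries R} (hf : oneUpTo c f) (hg : oneUpTo c g) :
    oneUpTo c (f * g) := by
  intro i hi
  have hrw : (PowerSeries.coeff (R := R) i) (f * g) =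
      ∑ x ∈ Finset.HasAntidiagonal.antidiagonal i, (if x.1 = 0 then (1 : R) else 0) * (if x.2 = 0 then 1 else 0) := by
    rw [PowerSeries.coeff_mul]
    refine Finset.sum_congr rfl fun x hx => ?_
    rw [Finset.HasAntidiagonal.mem_antidiagonal] at hx
    rw [hf x.1 (by omega), hg x.2 (by omega)]
  rw [hrw]
  rcases Nat.eq_zero_or_pos i with rfl | hipos
  · simp
  · rw [if_neg (show ¬ i = 0 by omega)]
    apply Finset.sum_eq_zero
    intro x hx
    rw [Finset.HasAntidiagonal.mem_antidiagonal] at hx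
    rcases Nat.eq_zero_or_pos x.1 with h1 | h1
    · rw [if_neg (show ¬ x.2 = 0 by omega), mul_zero]
    · rw [if_neg (show ¬ x.1 = 0 by omega), zero_mul]

lemma oneUpTo_geom (d : ℕ) : oneUpTo d (geom R d) := by
  intro i hi
  rw [coeff_geom]
  rcases Nat.eq_zero_or_pos i with rfl | hipos
  · simp
  · rw [if_neg (show ¬ d ∣ i from fun hdvd => by
      have := Nat.le_of_dvd hipos hdvd; omega), if_neg (show ¬ i = 0 by omega)]

lemma oneUpTo_one_sub_X_pow (d : ℕ) : oneUpTo d ((1 - PowerSeries.X ^ d : PowerSeries R)) := by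
  intro i hi
  rw [map_sub, PowerSeries.coeff_one, PowerSeries.coeff_X_pow,
    if_neg (show ¬ i = d by omega), sub_zero]

lemma oneUpTo_prod {ι : Type*} {s : Finset ι} {f : ι → PowerSeries R} {c : ℕ}
    (h : ∀ i ∈ s, oneUpTo c (f i)) : oneUpTo c (∏ i ∈ s, f i) := by
  classical
  induction s using Finset.induction_on with
  | empty => simpa using oneUpTo_one c
  | @insert a s hx ih =>
      rw [Finset.prod_insert hx]
      exact oneUpTo_mul (h _ (Finset.mem_insert_self _ _))
        (ih fun i hi => h i (Finset.mem_insert_of_mem hi))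

end OneUpTo

section GbIdent
variable {R : Type*} [CommRing R]

lemma cancel_of_QQ (m : ℕ) {u v : PowerSeries R} (h : u * QQ R m = v * QQ R m) : u = v := by
  have h2 := congrArg (· * QQi R m) h
  simpa [mul_assoc, QQ_mul_QQi] using h2

lemma QQi_one : QQi R 1 = geom R 2 := by
  rw [QQi, Finset.prod_range_one]

lemma aux_id (x : PowerSeries R) (a b : ℕ) :
    (1 - x^(a+b+6)) * (1 - x^(a+b+8)) =
      (1 - x^(a+4)) * (1 - x^(b+4)) * (1 + x^(a+b+6)) +
      x^(a+4) * ((1 - x^(b+2)) * (1 - x^(b+4))) +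
      x^(b+4) * ((1 - x^(a+2)) * (1 - x^(a+4))) := by
  ring

lemma GB_main (k m : ℕ) :
    Gb R (k+m+4) (k+2) = Gb R (k+m+2) (k+1) * (1 + PowerSeries.X^(2*k+2*m+6)) +
      PowerSeries.X^(2*k+4) * Gb R (k+m+2) (k+2) +
      PowerSeries.X^(2*m+4) * Gb R (k+m+2) k := by
  apply cancel_of_QQ (m+2)
  set x := (PowerSeries.X : PowerSeries R) with hx
  set PP := ∏ i ∈ Finset.Ico (k+2) (k+m+2), (1 - x^(2*i+2)) with hPP
  have h1 : Gb R (k+m+4) (k+2) * QQ R (m+2) = PP * ((1 - x^(2*k+2*m+6)) * (1 - x^(2*k+2*m+8))) := by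
    have e1 := Gb_mul_QQ (R := R) (a := k+m+4) (b := k+2) (by omega)
    rw [show k+m+4-(k+2) = m+2 by omega] at e1
    rw [e1, show k+m+4 = (k+m+3)+1 by omega, Finset.prod_Ico_succ_top (by omega),
      show k+m+3 = (k+m+2)+1 by omega, Finset.prod_Ico_succ_top (by omega),
      show 2*(k+m+2)+2 = 2*k+2*m+6 by ring, show 2*(k+m+3)+2 = 2*k+2*m+8 by ring]
    ring
  have h2 : Gb R (k+m+2) (k+1) * QQ R (m+2) = PP * ((1 - x^(2*k+4)) * (1 - x^(2*m+4))) := by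
    have e2 := Gb_mul_QQ (R := R) (a := k+m+2) (b := k+1) (by omega)
    rw [show k+m+2-(k+1) = m+1 by omega] at e2
    rw [show (m+2) = (m+1)+1 by omega, QQ_succ, ← mul_assoc, e2,
      Finset.prod_eq_prod_Ico_succ_bot (show k+1 < k+m+2 by omega),
      show k+1+1 = k+2 by omega, show 2*(k+1)+2 = 2*k+4 by ring,
      show 2*(m+1)+2 = 2*m+4 by ring]
    ring
  have h3 : Gb R (k+m+2) (k+2) * QQ R (m+2) = PP * ((1 - x^(2*m+2)) * (1 - x^(2*m+4))) := by
    have e3 := Gb_mul_QQ (R := R) (a := k+m+2) (b := k+2) (by omega)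
    rw [show k+m+2-(k+2) = m by omega] at e3
    rw [show (m+2) = (m+1)+1 by omega, QQ_succ, QQ_succ, ← mul_assoc, ← mul_assoc, e3,
      show 2*(m+1)+2 = 2*m+4 by ring]
    ring
  have h4 : Gb R (k+m+2) k * QQ R (m+2) = PP * ((1 - x^(2*k+2)) * (1 - x^(2*k+4))) := by
    have e4 := Gb_mul_QQ (R := R) (a := k+m+2) (b := k) (by omega)
    rw [show k+m+2-k = m+2 by omega] at e4
    rw [e4, Finset.prod_eq_prod_Ico_succ_bot (show k < k+m+2 by omega),
      Finset.prod_eq_prod_Ico_succ_bot (show k+1 < k+m+2 by omega),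
      show k+1+1 = k+2 by omega, show 2*(k+1)+2 = 2*k+4 by ring]
    ring
  rw [h1, show (Gb R (k+m+2) (k+1) * (1 + x^(2*k+2*m+6)) + x^(2*k+4) * Gb R (k+m+2) (k+2) +
      x^(2*m+4) * Gb R (k+m+2) k) * QQ R (m+2) =
      (Gb R (k+m+2) (k+1) * QQ R (m+2)) * (1 + x^(2*k+2*m+6)) +
      x^(2*k+4) * (Gb R (k+m+2) (k+2) * QQ R (m+2)) +
      x^(2*m+4) * (Gb R (k+m+2) k * QQ R (m+2)) from by ring, h2, h3, h4]
  have ha := aux_id x (2*k) (2*m)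
  linear_combination (PP : PowerSeries R) * ha

lemma GB_top1 (n : ℕ) (hn : 1 ≤ n) :
    Gb R (2*n+2) (2*n+1) = Gb R (2*n) (2*n) * (1 + PowerSeries.X^(4*n+2)) +
      PowerSeries.X^(4*n+2) * Gb R (2*n) (2*n+1) +
      PowerSeries.X^(2 : ℕ) * Gb R (2*n) (2*n-1) := by
  set x := (PowerSeries.X : PowerSeries R) with hx
  have hGb1 : Gb R (2*n+2) (2*n+1) = (1 - x^(4*n+4)) * geom R 2 := by
    rw [Gb, if_pos (by omega), show 2*n+2-(2*n+1) = 1 by omega, QQi_one,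
      show 2*n+2 = (2*n+1)+1 by omega, Finset.prod_Ico_succ_top le_rfl,
      Finset.Ico_self, Finset.prod_empty, one_mul, show 2*(2*n+1)+2 = 4*n+4 by ring]
  have hGb2 : Gb R (2*n) (2*n-1) = (1 - x^(4*n)) * geom R 2 := by
    rw [Gb, if_pos (by omega), show 2*n-(2*n-1) = 1 by omega, QQi_one,
      show (Finset.Ico (2*n-1) (2*n)) = Finset.Ico (2*n-1) ((2*n-1)+1) by rw [show (2*n-1)+1 = 2*n by omega],
      Finset.prod_Ico_succ_top le_rfl, Finset.Ico_self, Finset.prod_empty, one_mul,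
      show 2*(2*n-1)+2 = 4*n by omega]
  rw [hGb1, hGb2, Gb_self, Gb_of_gt (by omega), one_mul, mul_zero, add_zero]
  apply cancel_of_geom (show (2:ℕ) ≠ 0 by norm_num)
  have hg : geom R 2 * (1 - x^2) = 1 := geom_mul 2 (by norm_num)
  linear_combination ((1 - x^(4*n+4)) - x^2*(1-x^(4*n))) * hg

lemma GB_top0 (n : ℕ) :
    Gb R (2*n+2) (2*n+2) = Gb R (2*n) (2*n+1) * (1 + PowerSeries.X^(4*n+2)) +
      PowerSeries.X^(2*(2*n)+4) * Gb R (2*n) (2*n+2) +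
      PowerSeries.X^(0 : ℕ) * Gb R (2*n) (2*n) := by
  rw [Gb_self, Gb_self, Gb_of_gt (by omega), Gb_of_gt (by omega)]
  simp

lemma GB (n k : ℕ) (hk : k ≤ 2*n) :
    Gb R (2*n+2) (k+2) = Gb R (2*n) (k+1) * (1 + PowerSeries.X^(4*n+2)) +
      PowerSeries.X^(2*k+4) * Gb R (2*n) (k+2) +
      PowerSeries.X^(4*n-2*k) * Gb R (2*n) k := by
  rcases (show k + 2 ≤ 2*n ∨ k + 1 = 2*n ∨ k = 2*n by omega) with h | h | h
  · obtain ⟨m, hm⟩ : ∃ m, 2*n = k + m + 2 := ⟨2*n - k - 2, by omega⟩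
    rw [show 2*n+2 = k+m+4 by omega, hm,
      show 4*n+2 = 2*k+2*m+6 by omega, show 4*n-2*k = 2*m+4 by omega]
    exact GB_main k m
  · have hn : 1 ≤ n := by omega
    rw [show k = 2*n-1 by omega,
      show (2*n-1)+2 = 2*n+1 by omega, show (2*n-1)+1 = 2*n by omega,
      show 2*(2*n-1)+4 = 4*n+2 by omega, show 4*n-2*(2*n-1) = 2 by omega]
    exact GB_top1 n hn
  · rw [h, show 2*n+2 = (2*n)+2 by omega, show 4*n-2*(2*n) = 0 by omega,
      show 2*(2*n)+4 = 2*(2*n)+4 by omega]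
    exact GB_top0 n

end GbIdent

section CC
variable {R : Type*} [CommRing R]

def ee (n k : ℕ) : ℕ := if n ≤ k then (k - n) * (k - n + 1) else (n - k) * (n - k - 1)

lemma ee_cast (n k : ℕ) : (ee n k : ℤ) = ((k:ℤ) - n) * ((k:ℤ) - n + 1) := by
  rw [ee]
  split
  · rename_i h
    push_cast [Nat.cast_sub h]
    ring
  · rename_i h
    have h1 : k ≤ n := by omega
    have h2 : 1 ≤ n - k := by omega
    push_cast [Nat.cast_sub h1, Nat.cast_sub h2]
    ring

lemma ee_shift (n k : ℕ) : ee (n+1) (k+1) = ee n k := by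
  have : (ee (n+1) (k+1) : ℤ) = (ee n k : ℤ) := by
    rw [ee_cast, ee_cast]; push_cast; ring
  exact_mod_cast this

lemma ee_L0 (n : ℕ) : ee (n+1) 0 = 2*n + ee n 0 := by
  have : (ee (n+1) 0 : ℤ) = 2*n + (ee n 0 : ℤ) := by
    rw [ee_cast, ee_cast]; push_cast; ring
  exact_mod_cast this

lemma ee_L1 (n : ℕ) : 2*n + ee n 1 = ee n 0 + 2 := by
  have : (2*n + ee n 1 : ℤ) = (ee n 0 : ℤ) + 2 := by
    rw [ee_cast, ee_cast]; push_cast; ring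
  exact_mod_cast this

lemma ee_L2 (n k : ℕ) : 2*n + ee n (k+2) = ee n (k+1) + (2*k+4) := by
  have : (2*n + ee n (k+2) : ℤ) = (ee n (k+1) : ℤ) + (2*k+4) := by
    rw [ee_cast, ee_cast]; push_cast; ring
  exact_mod_cast this

lemma ee_L3 (n k : ℕ) (hk : k ≤ 2*n) : 2*n + 2 + ee n k = ee n (k+1) + (4*n - 2*k) := by
  have hc : ((4*n - 2*k : ℕ) : ℤ) = 4*(n:ℤ) - 2*k := by
    push_cast [Nat.cast_sub (show 2*k ≤ 4*n by omega)]; ring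
  have : (2*n + 2 + ee n k : ℤ) = (ee n (k+1) : ℤ) + ((4*n - 2*k : ℕ) : ℤ) := by
    rw [ee_cast, ee_cast, hc]; push_cast; ring
  exact_mod_cast this

noncomputable def cc (R : Type*) [CommRing R] (n k : ℕ) : PowerSeries R :=
  (-1)^(n+k) * PowerSeries.X^(ee n k) * Gb R (2*n) k

lemma cc_rec0 (n : ℕ) : cc R (n+1) 0 = - (PowerSeries.X^(2*n) * cc R n 0) := by
  rw [cc, cc, Gb_zero, Gb_zero, ee_L0, pow_add]
  ring

lemma hGA (n : ℕ) : Gb R (2*n+2) 1 = Gb R (2*n) 0 * (1 + PowerSeries.X^(4*n+2)) +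
    PowerSeries.X^(2:ℕ) * Gb R (2*n) 1 := by
  rcases Nat.eq_zero_or_pos n with rfl | hn
  · have h0 : Gb R (2*0) 1 = 0 := Gb_of_gt (by norm_num)
    have hGb1 : Gb R (2*0+2) 1 = (1 - PowerSeries.X^(4:ℕ)) * geom R 2 := by
      rw [Gb, if_pos (by omega), show 2*0+2-1 = 1 by omega, QQi_one]
      rw [show Finset.Ico 1 (2*0+2) = {1} by rfl, Finset.prod_singleton]
    rw [hGb1, Gb_zero, h0]
    apply cancel_of_geom (show (2:ℕ) ≠ 0 by norm_num)
    have hg : geom R 2 * (1 - PowerSeries.X^(2:ℕ)) = 1 := geom_mul 2 (by norm_num)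
    linear_combination (1 - (PowerSeries.X:PowerSeries R)^(4:ℕ)) * hg
  · apply cancel_of_QQ (2*n+1)
    have e1 := Gb_mul_QQ (R := R) (a := 2*n+2) (b := 1) (by omega)
    rw [show 2*n+2-1 = 2*n+1 by omega] at e1
    have e2 := Gb_mul_QQ (R := R) (a := 2*n) (b := 1) (by omega)
    have hq : QQ R (2*n+1) = QQ R (2*n-1) * ((1 - PowerSeries.X^(4*n)) * (1 - PowerSeries.X^(4*n+2))) := by
      rw [show 2*n+1 = (2*n-1)+1+1 by omega, QQ_succ, QQ_succ,
        show 2*(2*n-1)+2 = 4*n by omega, show 2*((2*n-1)+1)+2 = 4*n+2 by omega]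
      ring
    set W := ∏ i ∈ Finset.Ico 1 (2*n), (1 - (PowerSeries.X:PowerSeries R)^(2*i+2)) with hW
    have key1 : Gb R (2*n+2) 1 * QQ R (2*n+1) =
        W * ((1 - PowerSeries.X^(4*n+2)) * (1 - PowerSeries.X^(4*n+4))) := by
      rw [e1, show 2*n+2 = (2*n+1)+1 by omega, Finset.prod_Ico_succ_top (by omega),
        show 2*n+1 = (2*n)+1 by omega, Finset.prod_Ico_succ_top (by omega),
        show 2*(2*n)+2 = 4*n+2 by ring, show 2*(2*n+1)+2 = 4*n+4 by ring]
      ring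
    have key2 : Gb R (2*n) 1 * QQ R (2*n+1) =
        W * ((1 - PowerSeries.X^(4*n)) * (1 - PowerSeries.X^(4*n+2))) := by
      rw [hq, ← mul_assoc]
      rw [show 2*n - 1 = 2*n - 1 by rfl] at e2
      rw [e2]
    have key3 : QQ R (2*n+1) = (1 - PowerSeries.X^(2:ℕ)) * (W * (1 - PowerSeries.X^(4*n+2))) := by
      rw [QQ, Finset.prod_range_succ, show 2*(2*n)+2 = 4*n+2 by ring,
        Finset.range_eq_Ico, Finset.prod_eq_prod_Ico_succ_bot (show 0 < 2*n by omega),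
        show (0:ℕ)+1 = 1 by rfl, show 2*0+2 = 2 by rfl]
      ring
    rw [key1, add_mul, mul_assoc ((PowerSeries.X:PowerSeries R)^(2:ℕ)), key2, Gb_zero, one_mul, key3]
    ring

lemma cc_rec1 (n : ℕ) :
    cc R (n+1) 1 = cc R n 0 * (1 + PowerSeries.X^(4*n+2)) - PowerSeries.X^(2*n) * cc R n 1 := by
  rw [cc, cc, cc, show 2*(n+1) = 2*n+2 by ring, hGA n,
    show ee (n+1) 1 = ee n 0 from ee_shift n 0]
  have h1 : (PowerSeries.X:PowerSeries R)^(2*n) * PowerSeries.X^(ee n 1) =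
      PowerSeries.X^(ee n 0) * PowerSeries.X^(2:ℕ) := by
    rw [← pow_add, ← pow_add, ee_L1]
  calc (-1)^(n+1+1) * PowerSeries.X^(ee n 0) *
        (Gb R (2*n) 0 * (1 + PowerSeries.X^(4*n+2)) + PowerSeries.X^(2:ℕ) * Gb R (2*n) 1)
      = (-1)^(n+0) * PowerSeries.X^(ee n 0) * Gb R (2*n) 0 * (1 + PowerSeries.X^(4*n+2)) -
        PowerSeries.X^(2*n) * ((-1)^(n+1) * PowerSeries.X^(ee n 1) * Gb R (2*n) 1) := by
        rw [show (PowerSeries.X:PowerSeries R)^(2*n) * ((-1)^(n+1) * PowerSeries.X^(ee n 1) * Gb R (2*n) 1)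
            = (-1)^(n+1) * (PowerSeries.X^(2*n) * PowerSeries.X^(ee n 1)) * Gb R (2*n) 1 from by ring, h1]
        ring
    _ = _ := by ring

lemma cc_rec2 (n k : ℕ) :
    cc R (n+1) (k+2) = cc R n (k+1) * (1 + PowerSeries.X^(4*n+2)) -
      PowerSeries.X^(2*n) * cc R n (k+2) - PowerSeries.X^(2*n+2) * cc R n k := by
  rcases le_or_gt k (2*n) with hk | hk
  · rw [cc, cc, cc, cc, show 2*(n+1) = 2*n+2 by ring, GB n k hk,
      show ee (n+1) (k+2) = ee n (k+1) from ee_shift n (k+1)]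
    have h2 : (PowerSeries.X:PowerSeries R)^(2*n) * PowerSeries.X^(ee n (k+2)) =
        PowerSeries.X^(ee n (k+1)) * PowerSeries.X^(2*k+4) := by
      rw [← pow_add, ← pow_add, ee_L2]
    have h3 : (PowerSeries.X:PowerSeries R)^(2*n+2) * PowerSeries.X^(ee n k) =
        PowerSeries.X^(ee n (k+1)) * PowerSeries.X^(4*n-2*k) := by
      rw [← pow_add, ← pow_add, ee_L3 n k hk]
    calc (-1)^(n+1+(k+2)) * PowerSeries.X^(ee n (k+1)) *
          (Gb R (2*n) (k+1) * (1 + PowerSeries.X^(4*n+2)) +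
           PowerSeries.X^(2*k+4) * Gb R (2*n) (k+2) +
           PowerSeries.X^(4*n-2*k) * Gb R (2*n) k)
        = (-1)^(n+(k+1)) * PowerSeries.X^(ee n (k+1)) * Gb R (2*n) (k+1) * (1 + PowerSeries.X^(4*n+2)) -
          (-1)^(n+(k+2)) * (PowerSeries.X^(2*n) * PowerSeries.X^(ee n (k+2))) * Gb R (2*n) (k+2) -
          (-1)^(n+k) * (PowerSeries.X^(2*n+2) * PowerSeries.X^(ee n k)) * Gb R (2*n) k := by
          rw [h2, h3]; ring
      _ = _ := by ring
  · rw [cc, cc, cc, cc, show 2*(n+1) = 2*n+2 by ring,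
      Gb_of_gt (show 2*n+2 < k+2 by omega), Gb_of_gt (show 2*n < k+1 by omega),
      Gb_of_gt (show 2*n < k+2 by omega), Gb_of_gt (show 2*n < k by omega)]
    ring

end CC

section HPoly
variable {R : Type*} [CommRing R]

noncomputable def Hpoly (R : Type*) [CommRing R] (n : ℕ) : Polynomial (PowerSeries R) :=
  (∏ m ∈ Finset.range n, (1 - Polynomial.C ((PowerSeries.X : PowerSeries R)^(2*m+2)) * Polynomial.X)) *
  (∏ m ∈ Finset.range n, (Polynomial.X - Polynomial.C ((PowerSeries.X : PowerSeries R)^(2*m))))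

lemma cc_of_gt {m j : ℕ} (h : 2*m < j) : cc R m j = 0 := by
  rw [cc, Gb_of_gt h, mul_zero]

lemma coeff_Hpoly (n : ℕ) : ∀ j, (Hpoly R n).coeff j = cc R n j := by
  induction n with
  | zero =>
      intro j
      rw [Hpoly, Finset.range_zero, Finset.prod_empty, Finset.prod_empty, one_mul,
        Polynomial.coeff_one]
      rcases Nat.eq_zero_or_pos j with rfl | hj
      · rw [if_pos rfl, cc, Gb_self]
        norm_num [ee]
      · rw [if_neg (by omega), cc_of_gt (by omega)]
  | succ n ih =>
      intro j
      have hC : Polynomial.C ((PowerSeries.X : PowerSeries R)^(2*n+2)) *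
          Polynomial.C ((PowerSeries.X : PowerSeries R)^(2*n)) =
          Polynomial.C ((PowerSeries.X : PowerSeries R)^(4*n+2)) := by
        rw [← map_mul, ← pow_add, show (2*n+2)+(2*n) = 4*n+2 by ring]
      have hstep : Hpoly R (n+1) = Hpoly R n *
          ((1 - Polynomial.C ((PowerSeries.X : PowerSeries R)^(2*n+2)) * Polynomial.X) *
           (Polynomial.X - Polynomial.C ((PowerSeries.X : PowerSeries R)^(2*n)))) := by
        rw [Hpoly, Hpoly, Finset.prod_range_succ, Finset.prod_range_succ]
        ring
      have hg : (1 - Polynomial.C ((PowerSeries.X : PowerSeries R)^(2*n+2)) * Polynomial.X) *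
           (Polynomial.X - Polynomial.C ((PowerSeries.X : PowerSeries R)^(2*n))) =
          Polynomial.C (1 + (PowerSeries.X : PowerSeries R)^(4*n+2)) * Polynomial.X^1 -
          Polynomial.C ((PowerSeries.X : PowerSeries R)^(2*n)) -
          Polynomial.C ((PowerSeries.X : PowerSeries R)^(2*n+2)) * Polynomial.X^2 := by
        rw [map_add, map_one]
        linear_combination Polynomial.X * hC
      have hsplit : Hpoly R (n+1) =
          (Hpoly R n * Polynomial.C (1 + (PowerSeries.X : PowerSeries R)^(4*n+2))) * Polynomial.X^1 -
          Hpoly R n * Polynomial.C ((PowerSeries.X : PowerSeries R)^(2*n)) -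
          (Hpoly R n * Polynomial.C ((PowerSeries.X : PowerSeries R)^(2*n+2))) * Polynomial.X^2 := by
        rw [hstep, hg]; ring
      rw [hsplit]
      rw [Polynomial.coeff_sub, Polynomial.coeff_sub, Polynomial.coeff_mul_X_pow',
        Polynomial.coeff_mul_X_pow', Polynomial.coeff_mul_C, Polynomial.coeff_mul_C,
        Polynomial.coeff_mul_C, ih j]
      rcases j with _ | _ | k
      · rw [if_neg (by omega), if_neg (by omega), cc_rec0]
        ring
      · rw [if_pos (by omega), if_neg (by omega), show (1:ℕ)-1 = 0 from rfl, ih 0, cc_rec1]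
        ring
      · rw [show k+1+1 = k+2 from rfl, if_pos (by omega), if_pos (by omega),
          show k+2-1 = k+1 from rfl, show k+2-2 = k from rfl, ih (k+1), ih k, cc_rec2]
        ring

lemma fact2 (N : ℕ) : QQ R (N+1) * QQ R N =
    ∑ k ∈ Finset.range (2*(N+1)+1), cc R (N+1) k * (k : PowerSeries R) := by
  have hcong : (∏ m ∈ Finset.range N,
        (Polynomial.X - Polynomial.C ((PowerSeries.X : PowerSeries R)^(2*(m+1)))))
      = ∏ m ∈ Finset.range N, (Polynomial.X - Polynomial.C ((PowerSeries.X : PowerSeries R)^(2*m+2))) := by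
    refine Finset.prod_congr rfl (fun m _ => ?_)
    rw [show 2*(m+1) = 2*m+2 by ring]
  have hfac : Hpoly R (N+1) = (Polynomial.X - 1) *
      ((∏ m ∈ Finset.range (N+1),
          (1 - Polynomial.C ((PowerSeries.X : PowerSeries R)^(2*m+2)) * Polynomial.X)) *
       (∏ m ∈ Finset.range N,
          (Polynomial.X - Polynomial.C ((PowerSeries.X : PowerSeries R)^(2*m+2))))) := by
    rw [Hpoly, Finset.prod_range_succ' (fun m => Polynomial.X -
      Polynomial.C ((PowerSeries.X : PowerSeries R)^(2*m))), hcong, pow_zero, map_one]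
    ring
  have hsum : Hpoly R (N+1) = ∑ k ∈ Finset.range (2*(N+1)+1),
      Polynomial.C (cc R (N+1) k) * Polynomial.X^k := by
    apply Polynomial.ext
    intro j
    rw [Polynomial.finset_sum_coeff, coeff_Hpoly]
    have hterm : ∀ k ∈ Finset.range (2*(N+1)+1),
        (Polynomial.C (cc R (N+1) k) * Polynomial.X^k).coeff j
          = if k = j then cc R (N+1) k else 0 := by
      intro k _
      rw [Polynomial.coeff_C_mul, Polynomial.coeff_X_pow]
      rcases eq_or_ne k j with rfl | hkj
      · rw [if_pos rfl, if_pos rfl, mul_one]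
      · rw [if_neg (fun h => hkj h.symm), if_neg hkj, mul_zero]
    rw [Finset.sum_congr rfl hterm, Finset.sum_ite_eq' (Finset.range (2*(N+1)+1)) j]
    split
    · rfl
    · rename_i hj
      rw [Finset.mem_range] at hj
      rw [cc_of_gt (by omega)]
  have hL : Polynomial.eval 1 (Polynomial.derivative (Hpoly R (N+1))) = QQ R (N+1) * QQ R N := by
    rw [hfac, Polynomial.derivative_mul, Polynomial.derivative_sub, Polynomial.derivative_X,
      Polynomial.derivative_one, sub_zero, one_mul]
    rw [Polynomial.eval_add, Polynomial.eval_mul (p := Polynomial.X - 1), Polynomial.eval_sub,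
      Polynomial.eval_X, Polynomial.eval_one, sub_self, zero_mul, add_zero]
    rw [Polynomial.eval_mul, Polynomial.eval_prod, Polynomial.eval_prod]
    have hp1 : ∀ m ∈ Finset.range (N+1),
        Polynomial.eval 1 (1 - Polynomial.C ((PowerSeries.X : PowerSeries R)^(2*m+2)) * Polynomial.X)
          = 1 - (PowerSeries.X : PowerSeries R)^(2*m+2) := by
      intro m _
      rw [Polynomial.eval_sub, Polynomial.eval_one, Polynomial.eval_mul, Polynomial.eval_C,
        Polynomial.eval_X, mul_one]
    have hp2 : ∀ m ∈ Finset.range N,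
        Polynomial.eval 1 (Polynomial.X - Polynomial.C ((PowerSeries.X : PowerSeries R)^(2*m+2)))
          = 1 - (PowerSeries.X : PowerSeries R)^(2*m+2) := by
      intro m _
      rw [Polynomial.eval_sub, Polynomial.eval_X, Polynomial.eval_C]
    rw [Finset.prod_congr rfl hp1, Finset.prod_congr rfl hp2]
    rw [QQ, QQ]
  have hR : Polynomial.eval 1 (Polynomial.derivative (Hpoly R (N+1))) =
      ∑ k ∈ Finset.range (2*(N+1)+1), cc R (N+1) k * (k : PowerSeries R) := by
    rw [hsum, Polynomial.derivative_sum, Polynomial.eval_finset_sum]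
    refine Finset.sum_congr rfl (fun k _ => ?_)
    rw [Polynomial.derivative_C_mul, Polynomial.derivative_X_pow, Polynomial.eval_mul,
      Polynomial.eval_C, Polynomial.eval_mul, Polynomial.eval_C, Polynomial.eval_pow,
      Polynomial.eval_X, one_pow, mul_one]
  rw [← hL, hR]

end HPoly

section Jacobi
variable {R : Type*} [CommRing R]

lemma ee_ge (n k : ℕ) (hnk : n ≤ k) : ee n k = (k-n)*(k-n+1) := by
  rw [ee, if_pos hnk]

lemma ee_lt (n k : ℕ) (hnk : k < n) : ee n k = (n-k)*(n-k-1) := by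
  rw [ee, if_neg (by omega)]

lemma oneUpTo_QQ_Gb (n k : ℕ) (hk : k ≤ 2*n) :
    oneUpTo (2*n - ee n k) (QQ R n * Gb R (2*n) k) := by
  have hE : oneUpTo (2*k+2)
      (∏ i ∈ Finset.Ico k (2*n), (1 - PowerSeries.X^(2*i+2) : PowerSeries R)) := by
    apply oneUpTo_prod
    intro i hi
    rw [Finset.mem_Ico] at hi
    exact oneUpTo_mono (by omega) (oneUpTo_one_sub_X_pow (2*i+2))
  have hGb : QQ R n * Gb R (2*n) k =
      (∏ i ∈ Finset.Ico k (2*n), (1 - PowerSeries.X^(2*i+2))) * (QQ R n * QQi R (2*n - k)) := by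
    rw [Gb, if_pos hk]
    ring
  rcases le_or_gt n k with hnk | hnk
  · -- k ≥ n
    obtain ⟨a, rfl⟩ : ∃ a, k = n + a := ⟨k - n, by omega⟩
    have heq : ee n (n+a) = a*(a+1) := by
      rw [ee_ge n (n+a) (by omega), show n+a-n = a by omega]
    have hsplit : QQ R n * QQi R (2*n - (n+a)) =
        ∏ i ∈ Finset.Ico (2*n-(n+a)) n, (1 - PowerSeries.X^(2*i+2) : PowerSeries R) := by
      have hr := Finset.prod_range_mul_prod_Ico
        (fun i => (1 - PowerSeries.X^(2*i+2) : PowerSeries R)) (show 2*n-(n+a) ≤ n by omega)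
      have hQ : QQ R n = QQ R (2*n-(n+a)) *
          ∏ i ∈ Finset.Ico (2*n-(n+a)) n, (1 - PowerSeries.X^(2*i+2) : PowerSeries R) := by
        rw [QQ, QQ, ← hr]
      rw [hQ, mul_right_comm, QQ_mul_QQi, one_mul]
    have hP : oneUpTo (2*(2*n-(n+a))+2)
        (∏ i ∈ Finset.Ico (2*n-(n+a)) n, (1 - PowerSeries.X^(2*i+2) : PowerSeries R)) := by
      apply oneUpTo_prod
      intro i hi
      rw [Finset.mem_Ico] at hi
      exact oneUpTo_mono (by omega) (oneUpTo_one_sub_X_pow (2*i+2))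
    rw [hGb, hsplit]
    have harith2 : 2*a ≤ a*(a+1) + 2 := by
      rcases a with _ | b
      · omega
      · have h1 : (b+1)*(b+1+1) = b*b+3*b+2 := by ring
        omega
    refine oneUpTo_mul (oneUpTo_mono ?_ hE) (oneUpTo_mono ?_ hP)
    · omega
    · rw [heq]; omega
  · -- k < n
    obtain ⟨b, hb1, rfl⟩ : ∃ b, 1 ≤ b ∧ n = k + b := ⟨n - k, by omega, by omega⟩
    have heq : ee (k+b) k = b*(b-1) := by
      rw [ee_lt (k+b) k (by omega), show k+b-k = b by omega]
    have hsplit : QQ R (k+b) * QQi R (2*(k+b) - k) =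
        ∏ i ∈ Finset.Ico (k+b) (2*(k+b)-k), geom R (2*i+2) := by
      have hr := Finset.prod_range_mul_prod_Ico
        (fun i => geom R (2*i+2)) (show k+b ≤ 2*(k+b)-k by omega)
      have hQ : QQi R (2*(k+b)-k) = QQi R (k+b) *
          ∏ i ∈ Finset.Ico (k+b) (2*(k+b)-k), geom R (2*i+2) := by
        rw [QQi, QQi, ← hr]
      rw [hQ, ← mul_assoc, QQ_mul_QQi, one_mul]
    have hP : oneUpTo (2*(k+b)+2)
        (∏ i ∈ Finset.Ico (k+b) (2*(k+b)-k), geom R (2*i+2)) := by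
      apply oneUpTo_prod
      intro i hi
      rw [Finset.mem_Ico] at hi
      exact oneUpTo_mono (by omega) (oneUpTo_geom (2*i+2))
    rw [hGb, hsplit]
    have harith3 : 2*b ≤ b*(b-1) + 2 := by
      rcases b with _ | c
      · omega
      · have h1 : (c+1)*(c+1-1) = c*c + c := by
          rw [Nat.add_sub_cancel]; ring
        have h2 : c ≤ c*c := by
          rcases Nat.eq_zero_or_pos c with rfl | hc
          · omega
          · exact Nat.le_mul_of_pos_left c hc
        omega
    refine oneUpTo_mul (oneUpTo_mono ?_ hE) (oneUpTo_mono ?_ hP)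
    · rw [heq]; omega
    · omega

lemma jacobi_vanish (N b : ℕ) (hb : b ≤ 2*N+1) (h : ∀ l : ℕ, b ≠ l*(l+1)) :
    (PowerSeries.coeff (R := R) b) ((QQ R (N+1))^3) = 0 := by
  have h3 : (QQ R (N+1))^3 = QQ R (N+1) *
        (∑ k ∈ Finset.range (2*(N+1)+1), cc R (N+1) k * (k : PowerSeries R)) -
      PowerSeries.X^(2*N+2) * ((QQ R (N+1))^2 * QQ R N) := by
    rw [← fact2]
    linear_combination ((QQ R (N+1)):PowerSeries R)^2 * QQ_succ (R := R) N
  rw [h3, map_sub, PowerSeries.coeff_X_pow_mul', if_neg (by omega), sub_zero,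
    Finset.mul_sum, map_sum]
  apply Finset.sum_eq_zero
  intro k hk
  rw [Finset.mem_range] at hk
  have hk2n : k ≤ 2*(N+1) := by omega
  have hup := oneUpTo_QQ_Gb (R := R) (N+1) k hk2n
  have hneq : ee (N+1) k ≠ b := by
    intro hee
    rcases le_or_gt (N+1) k with hnk | hnk
    · exact h (k - (N+1)) (by rw [← hee, ee_ge _ _ hnk])
    · refine h ((N+1) - k - 1) ?_
      rw [← hee, ee_lt _ _ hnk, show (N+1)-k-1+1 = (N+1)-k by omega, Nat.mul_comm]
  have hrep : QQ R (N+1) * (cc R (N+1) k * (k : PowerSeries R)) =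
      PowerSeries.C (R := R) ((-1)^((N+1)+k) * (k : R)) *
        (PowerSeries.X^(ee (N+1) k) * (QQ R (N+1) * Gb R (2*(N+1)) k)) := by
    rw [cc, map_mul, map_pow, map_neg, map_one, map_natCast]
    ring
  rw [hrep, PowerSeries.coeff_C_mul, PowerSeries.coeff_X_pow_mul']
  split
  · rename_i hle
    rw [hup (b - ee (N+1) k) (by omega), if_neg (by omega), mul_zero]
  · rw [mul_zero]

end Jacobi

section ModP
variable {R : Type*} [CommRing R]

lemma invOfUnit_eq_geom (d : ℕ) (hd : d ≠ 0) :
    PowerSeries.invOfUnit (1 - PowerSeries.X^d : PowerSeries R) 1 = geom R d := by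
  have hc : PowerSeries.constantCoeff (R := R) (1 - PowerSeries.X^d) = ((1 : Rˣ) : R) := by
    rw [map_sub, map_one, map_pow, PowerSeries.constantCoeff_X, zero_pow hd, sub_zero,
      Units.val_one]
  have h1 : ((1 : PowerSeries R) - PowerSeries.X^d) *
      PowerSeries.invOfUnit ((1 : PowerSeries R) - PowerSeries.X^d) 1 = 1 :=
    PowerSeries.mul_invOfUnit _ _ hc
  calc PowerSeries.invOfUnit (1 - PowerSeries.X^d) 1
      = (geom R d * (1 - PowerSeries.X^d)) * PowerSeries.invOfUnit (1 - PowerSeries.X^d) 1 := by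
        rw [geom_mul d hd, one_mul]
    _ = geom R d * ((1 - PowerSeries.X^d) * PowerSeries.invOfUnit (1 - PowerSeries.X^d) 1) := by
        ring
    _ = geom R d := by rw [h1, mul_one]

lemma map_geom {S : Type*} [CommRing S] (f : R →+* S) (d : ℕ) :
    PowerSeries.map f (geom R d) = geom S d := by
  ext i
  rw [PowerSeries.coeff_map, coeff_geom, coeff_geom]
  split <;> simp

lemma geom_pow_p (p : ℕ) [Fact p.Prime] (d : ℕ) (hd : d ≠ 0) :
    (geom (ZMod p) d)^p = geom (ZMod p) (d*p) := by
  haveI : CharP (PowerSeries (ZMod p)) p :=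
    charP_of_injective_ringHom (PowerSeries.C_injective (R := ZMod p)) p
  have hfr : ((1 : PowerSeries (ZMod p)) - PowerSeries.X^d)^p = 1 - PowerSeries.X^(d*p) := by
    rw [sub_pow_char, one_pow, ← pow_mul]
  have h1 : geom (ZMod p) d ^ p * (1 - PowerSeries.X^(d*p)) = 1 := by
    rw [← hfr, ← mul_pow, geom_mul d hd, one_pow]
  calc geom (ZMod p) d ^ p
      = (geom (ZMod p) (d*p) * (1 - PowerSeries.X^(d*p))) * geom (ZMod p) d ^ p := by
        rw [geom_mul (d*p) (Nat.mul_ne_zero hd (Nat.Prime.ne_zero Fact.out)), one_mul]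
    _ = geom (ZMod p) (d*p) * (geom (ZMod p) d ^ p * (1 - PowerSeries.X^(d*p))) := by ring
    _ = geom (ZMod p) (d*p) := by rw [h1, mul_one]

/-- support contained in multiples of `p` -/
def SuppDvd (p : ℕ) (f : PowerSeries R) : Prop :=
  ∀ i, ¬ (p ∣ i) → (PowerSeries.coeff (R := R) i) f = 0

lemma SuppDvd.one (p : ℕ) : SuppDvd p (1 : PowerSeries R) := by
  intro i hi
  rw [PowerSeries.coeff_one, if_neg (fun h => hi (by rw [h]; exact dvd_zero p))]

lemma SuppDvd.mul {p : ℕ} {f g : PowerSeries R} (hf : SuppDvd p f) (hg : SuppDvd p g) :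
    SuppDvd p (f * g) := by
  intro i hi
  rw [PowerSeries.coeff_mul]
  apply Finset.sum_eq_zero
  intro x hx
  rw [Finset.HasAntidiagonal.mem_antidiagonal] at hx
  by_cases h1 : p ∣ x.1
  · have h2 : ¬ p ∣ x.2 := fun h2 => hi (hx ▸ Nat.dvd_add h1 h2)
    rw [hg x.2 h2, mul_zero]
  · rw [hf x.1 h1, zero_mul]

lemma SuppDvd.pow {p : ℕ} {f : PowerSeries R} (hf : SuppDvd p f) (n : ℕ) :
    SuppDvd p (f ^ n) := by
  induction n with
  | zero => simpa using SuppDvd.one (R := R) p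
  | succ n ih => rw [pow_succ]; exact ih.mul hf

lemma SuppDvd.prod {p : ℕ} {ι : Type*} {s : Finset ι} {f : ι → PowerSeries R}
    (h : ∀ i ∈ s, SuppDvd p (f i)) : SuppDvd p (∏ i ∈ s, f i) := by
  classical
  induction s using Finset.induction_on with
  | empty => simpa using SuppDvd.one (R := R) p
  | @insert a s hx ih =>
      rw [Finset.prod_insert hx]
      exact (h _ (Finset.mem_insert_self _ _)).mul (ih fun i hi => h i (Finset.mem_insert_of_mem hi))

lemma SuppDvd.geom_mul_p {p : ℕ} (d : ℕ) : SuppDvd p (geom R (d * p)) := by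
  intro i hi
  rw [coeff_geom, if_neg (fun h => hi ((dvd_mul_left p d).trans h))]

end ModP

theorem stmt7 (p : ℕ) (hp : p.Prime) (hp5 : 5 ≤ p)
    (r : ℕ) (hr1 : 1 ≤ r) (hr2 : r ≤ p - 1)
    (hqnr : ∀ x : ℤ, ¬ x ^ 2 ≡ (4 * r + 1 : ℕ) [ZMOD p])
    (n j k : ℕ) (hjk : j ≤ k) :
    colorPart (p * (k - j) + (p - 3)) (p * k + p) (p * n + r) ≡ 0 [ZMOD p] := by
  haveI : Fact p.Prime := ⟨hp⟩
  set Rr := p * (k - j) + (p - 3) with hRr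
  set S := p * k + p with hS
  set N := p * n + r with hN
  suffices hz : ((colorPart Rr S N : ℤ) : ZMod p) = 0 by
    exact (Int.modEq_zero_iff_dvd).mpr ((ZMod.intCast_zmod_eq_zero_iff_dvd _ p).mp hz)
  have hcast : ((colorPart Rr S N : ℤ) : ZMod p) =
      PowerSeries.coeff (R := ZMod p) N (PowerSeries.map (Int.castRingHom (ZMod p))
        (∏ m ∈ Finset.range (N + 1),
          (PowerSeries.invOfUnit (1 - PowerSeries.X ^ (2 * m + 1)) 1) ^ S *
          (PowerSeries.invOfUnit (1 - PowerSeries.X ^ (2 * m + 2)) 1) ^ Rr)) := by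
    rw [PowerSeries.coeff_map, colorPart]
    rfl
  rw [hcast]
  have hprodmap : PowerSeries.map (Int.castRingHom (ZMod p))
      (∏ m ∈ Finset.range (N + 1),
        (PowerSeries.invOfUnit (1 - PowerSeries.X ^ (2 * m + 1)) 1) ^ S *
        (PowerSeries.invOfUnit (1 - PowerSeries.X ^ (2 * m + 2)) 1) ^ Rr) =
      ∏ m ∈ Finset.range (N + 1), geom (ZMod p) (2*m+1) ^ S * geom (ZMod p) (2*m+2) ^ Rr := by
    rw [map_prod]
    refine Finset.prod_congr rfl fun m _ => ?_
    rw [map_mul, map_pow, map_pow, invOfUnit_eq_geom (2*m+1) (by omega),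
      invOfUnit_eq_geom (2*m+2) (by omega), map_geom, map_geom]
  rw [hprodmap]
  have hfac : ∀ m ∈ Finset.range (N+1),
      geom (ZMod p) (2*m+1) ^ S * geom (ZMod p) (2*m+2) ^ Rr =
      (geom (ZMod p) ((2*m+1)*p) ^ (k+1) * geom (ZMod p) ((2*m+2)*p) ^ (k-j+1)) *
      ((1 - PowerSeries.X^(2*m+2)) ^ 3) := by
    intro m _
    have h1 : geom (ZMod p) (2*m+1) ^ S = geom (ZMod p) ((2*m+1)*p) ^ (k+1) := by
      rw [hS, show p*k+p = p*(k+1) by ring, pow_mul, geom_pow_p p (2*m+1) (by omega)]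
    have e0 : Rr + 3 = p*(k-j+1) := by
      rw [hRr, show p*(k-j+1) = p*(k-j) + p by ring]
      omega
    have e1 : geom (ZMod p) (2*m+2) ^ (Rr+3) = geom (ZMod p) ((2*m+2)*p) ^ (k-j+1) := by
      rw [e0, pow_mul, geom_pow_p p (2*m+2) (by omega)]
    have hg3 : (geom (ZMod p) (2*m+2) * (1 - PowerSeries.X^(2*m+2)))^3 = 1 := by
      rw [geom_mul (2*m+2) (by omega), one_pow]
    have h2 : geom (ZMod p) (2*m+2) ^ Rr = geom (ZMod p) ((2*m+2)*p) ^ (k-j+1) *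
        (1 - PowerSeries.X^(2*m+2)) ^ 3 := by
      calc geom (ZMod p) (2*m+2) ^ Rr
          = geom (ZMod p) (2*m+2) ^ Rr *
            (geom (ZMod p) (2*m+2) * (1 - PowerSeries.X^(2*m+2)))^3 := by
            rw [hg3, mul_one]
        _ = geom (ZMod p) (2*m+2) ^ (Rr+3) * (1 - PowerSeries.X^(2*m+2)) ^ 3 := by
            rw [pow_add (geom (ZMod p) (2*m+2)) Rr 3, mul_pow]
            ring
        _ = geom (ZMod p) ((2*m+2)*p) ^ (k-j+1) * (1 - PowerSeries.X^(2*m+2)) ^ 3 := by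
            rw [e1]
    rw [h1, h2]
    ring
  rw [Finset.prod_congr rfl hfac, Finset.prod_mul_distrib, Finset.prod_pow]
  rw [PowerSeries.coeff_mul]
  apply Finset.sum_eq_zero
  intro x hx
  rw [Finset.HasAntidiagonal.mem_antidiagonal] at hx
  by_cases hpx : p ∣ x.1
  · have hb : x.2 ≤ 2*N+1 := by omega
    have hnot : ∀ l : ℕ, x.2 ≠ l*(l+1) := by
      intro l hl
      obtain ⟨t, ht⟩ := hpx
      rw [hN] at hx
      have hsum : (x.1 : ℤ) + (x.2 : ℤ) = (p:ℤ)*n + r := by exact_mod_cast hx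
      have hti : (x.1 : ℤ) = (p:ℤ)*t := by exact_mod_cast ht
      have hlz : (x.2 : ℤ) = (l:ℤ)*((l:ℤ)+1) := by exact_mod_cast hl
      apply hqnr (2*(l:ℤ)+1)
      refine Int.modEq_iff_dvd.mpr ⟨4*((t:ℤ) - n), ?_⟩
      push_cast
      linear_combination (-4:ℤ) * hsum + 4*hti + 4*hlz
    have h0 : PowerSeries.coeff (R := ZMod p) x.2 ((QQ (ZMod p) (N+1))^3) = 0 :=
      jacobi_vanish N x.2 hb hnot
    rw [show (∏ m ∈ Finset.range (N+1), ((1:PowerSeries (ZMod p)) - PowerSeries.X^(2*m+2)))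
      = QQ (ZMod p) (N+1) from rfl, h0, mul_zero]
  · have hC : SuppDvd p (∏ m ∈ Finset.range (N+1),
        geom (ZMod p) ((2*m+1)*p) ^ (k+1) * geom (ZMod p) ((2*m+2)*p) ^ (k-j+1)) := by
      apply SuppDvd.prod
      intro m _
      exact ((SuppDvd.geom_mul_p (2*m+1)).pow (k+1)).mul ((SuppDvd.geom_mul_p (2*m+2)).pow (k-j+1))
    rw [hC x.1 hpx, zero_mul]
end

section
/- Let p ≥ 5 be a prime and let r be an integer with 1 ≤ r ≤ p-1 such that 4r+1 ≡ 0 (mod p). Then for all integers n ≥ 0 and all integers k ≥ j ≥ 0, a_{p(k-j)+(p-3), pk+p}(pn+r) ≡ 0 (mod p). -/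
noncomputable section PartOne
open Polynomial Finset
namespace Jac


def gb : ℕ → ℕ → Polynomial ℤ
  | 0, 0 => 1
  | 0, _+1 => 0
  | _+1, 0 => 1
  | n+1, k+1 => gb n (k+1) + X ^ (n - k) * gb n k
def px (n : ℕ) : Polynomial ℤ := ∏ i ∈ range n, (1 - X ^ (i+1))
lemma gb_succ_succ (n k : ℕ) : gb (n+1) (k+1) = gb n (k+1) + X ^ (n - k) * gb n k := rfl
@[simp] lemma gb_zero_right (n : ℕ) : gb n 0 = 1 := by cases n <;> rfl
lemma gb_eq_zero : ∀ {n k : ℕ}, n < k → gb n k = 0 := by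
  intro n
  induction n with
  | zero => intro k hk; match k, hk with | (k+1), _ => rfl
  | succ n ih =>
    intro k hk
    match k, hk with
    | (k+1), hk => rw [gb_succ_succ, ih (by omega), ih (by omega), mul_zero, add_zero]
@[simp] lemma gb_diag (n : ℕ) : gb n n = 1 := by
  induction n with
  | zero => rfl
  | succ n ih => rw [gb_succ_succ, gb_eq_zero (by omega), ih, zero_add, Nat.sub_self, pow_zero, one_mul]
@[simp] lemma px_zero : px 0 = 1 := rfl
lemma px_succ (n : ℕ) : px (n+1) = px n * (1 - X ^ (n+1)) := prod_range_succ _ _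
lemma one_sub_X_pow_ne_zero (i : ℕ) : (1 - X ^ (i+1) : Polynomial ℤ) ≠ 0 := by
  intro h
  have := congrArg (fun f => Polynomial.coeff f 0) h
  simp [coeff_X_pow] at this
lemma px_ne_zero (n : ℕ) : px n ≠ 0 :=
  Finset.prod_ne_zero_iff.2 fun i _ => one_sub_X_pow_ne_zero i
lemma px_gb : ∀ m k : ℕ, k ≤ m → px k * px (m - k) * gb m k = px m := by
  intro m
  induction m with
  | zero => intro k hk; interval_cases k; simp [px]
  | succ m ih =>
    intro k hk
    rcases Nat.eq_or_lt_of_le hk with h | h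
    · subst h; simp [Nat.sub_self, px]
    · match k with
      | 0 => simp
      | (s+1) =>
        have hs1m : s + 1 ≤ m := by omega
        set a := m - (s+1) with ha
        have e1 : m + 1 - (s+1) = a + 1 := by omega
        have e2 : m - s = a + 1 := by omega
        have ih1 : px (s+1) * px a * gb m (s+1) = px m := ih (s+1) hs1m
        have ih2 : px s * px (a+1) * gb m s = px m := by
          have : m - s = a + 1 := e2
          rw [← this]; exact ih s (by omega)
        have epow : (X : Polynomial ℤ) ^ (m+1) = X ^ (a+1) * X ^ (s+1) := by
          rw [← pow_add]; congr 1; omega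
        rw [gb_succ_succ, e1, e2, px_succ m, px_succ a, px_succ s, epow]
        rw [px_succ a] at ih2
        rw [px_succ s] at ih1
        linear_combination (1 - X^(a+1)) * ih1 + X^(a+1) * (1 - X^(s+1)) * ih2
/-- Ratio identity. -/
lemma gb_ratio (m k : ℕ) : (1 - X ^ (k+1)) * gb m (k+1) = (1 - X ^ (m - k)) * gb m k := by
  rcases le_or_gt (k+1) m with h | h
  · -- real case
    have h1 : px (k+1) * px (m - (k+1)) * gb m (k+1) = px m := px_gb m (k+1) h
    have h2 : px k * px (m - k) * gb m k = px m := px_gb m k (by omega)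
    have e1 : m - k = (m - (k+1)) + 1 := by omega
    have hc : px k * px (m - (k+1)) ≠ 0 := mul_ne_zero (px_ne_zero _) (px_ne_zero _)
    apply mul_left_cancel₀ hc
    rw [px_succ k] at h1
    rw [e1, px_succ (m - (k+1))] at h2
    rw [e1]
    linear_combination h1 - h2
  · rcases Nat.eq_or_lt_of_le h with h' | h'
    · have hm : m = k := by omega
      subst hm
      rw [Nat.sub_self, pow_zero, sub_self, zero_mul, gb_eq_zero (by omega), mul_zero]
    · rw [gb_eq_zero (by omega), gb_eq_zero (by omega), mul_zero, mul_zero]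

lemma gb_G2 (n k : ℕ) : gb (2*n+2) (k+2)
    = X^(k+2) * gb (2*n) (k+2) + (1 + X^(2*n+1)) * gb (2*n) (k+1) + X^(2*n-k) * gb (2*n) k := by
  rcases le_or_gt (k+1) (2*n) with h | h
  · obtain ⟨b, hb⟩ : ∃ b, 2*n - (k+1) = b := ⟨_, rfl⟩
    have e0 : 2*n - k = b + 1 := by omega
    have e1 : 2*n + 1 = b + (k + 2) := by omega
    have e2 : 2*n + 1 - (k+1) = b + 1 := by omega
    have e3 : 2*n - (k+1) = b := hb
    have a1 : gb (2*n+2) (k+2) = gb (2*n+1) (k+2) + X^(b+1) * gb (2*n+1) (k+1) := by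
      rw [show 2*n+2 = (2*n+1)+1 from rfl, gb_succ_succ, e2]
    have a2 : gb (2*n+1) (k+2) = gb (2*n) (k+2) + X^b * gb (2*n) (k+1) := by
      rw [gb_succ_succ, e3]
    have a3 : gb (2*n+1) (k+1) = gb (2*n) (k+1) + X^(b+1) * gb (2*n) k := by
      rw [gb_succ_succ, e0]
    have r1 : (1 - X ^ (k+2)) * gb (2*n) (k+2) = (1 - X^b) * gb (2*n) (k+1) := by
      have := gb_ratio (2*n) (k+1); rw [e3] at this; exact this
    have r2 : (1 - X ^ (k+1)) * gb (2*n) (k+1) = (1 - X^(b+1)) * gb (2*n) k := by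
      have := gb_ratio (2*n) k; rw [e0] at this; exact this
    rw [a1, a2, a3, e0, e1]
    linear_combination r1 + X^(b+1) * r2
  · rcases Nat.eq_or_lt_of_le h with h' | h'
    · have hk : k = 2*n := by omega
      subst hk
      have z1 : gb (2*n) (2*n+2) = 0 := gb_eq_zero (by omega)
      have z2 : gb (2*n) (2*n+1) = 0 := gb_eq_zero (by omega)
      rw [z1, z2, gb_diag, gb_diag, Nat.sub_self]
      ring
    · have z1 : gb (2*n) (k+2) = 0 := gb_eq_zero (by omega)
      have z2 : gb (2*n) (k+1) = 0 := gb_eq_zero (by omega)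
      have z3 : gb (2*n) k = 0 := gb_eq_zero (by omega)
      have z4 : gb (2*n+2) (k+2) = 0 := gb_eq_zero (by omega)
      rw [z1, z2, z3, z4]
      ring

def T (d : ℤ) : ℕ := (d*(d+1)/2).toNat

lemma Tcast (d : ℤ) : (T d : ℤ) * 2 = d*(d+1) := by
  have he : 2 ∣ d*(d+1) := (Int.even_mul_succ_self d).two_dvd
  have hnn : 0 ≤ d*(d+1) := by rcases le_or_gt 0 d with h | h <;> nlinarith
  unfold T
  rw [Int.toNat_of_nonneg (Int.ediv_nonneg hnn (by norm_num))]
  exact Int.ediv_mul_cancel he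

def E (n k : ℕ) : ℕ := T ((k:ℤ) - (n:ℤ))

lemma Ecast (n k : ℕ) : (E n k : ℤ) * 2 = ((k:ℤ) - n) * ((k:ℤ) - n + 1) := by
  unfold E; rw [Tcast]

def Φ (n k : ℕ) : Polynomial ℤ := (-1)^(n+k) * gb (2*n) k * X^(E n k)

lemma gb_one (m : ℕ) : gb m 1 = ∑ i ∈ range m, X^i := by
  induction m with
  | zero => simp [gb]
  | succ m ih =>
    rw [gb_succ_succ, ih, gb_zero_right, Nat.sub_zero, mul_one, sum_range_succ]

lemma gb_one_step (n : ℕ) : gb (2*n+2) 1 = X * gb (2*n) 1 + 1 + X^(2*n+1) := by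
  rw [gb_one, gb_one, Finset.mul_sum]
  rw [sum_range_succ, sum_range_succ']
  simp [pow_succ, mul_comm]

lemma key0 (n : ℕ) : Φ (n+1) 0 = -(X^n) * Φ n 0 := by
  unfold Φ
  have e : E (n+1) 0 = n + E n 0 := by
    have h1 := Ecast n 0; have h2 := Ecast (n+1) 0
    push_cast at h1 h2
    have : ((E (n+1) 0 : ℤ)) * 2 = (E n 0 : ℤ)*2 + 2*n := by linear_combination h2 - h1
    omega
  rw [e, pow_add]
  simp only [gb_zero_right]
  ring

lemma key1 (n : ℕ) : Φ (n+1) 1 = -(X^n) * Φ n 1 + (1 + X^(2*n+1)) * Φ n 0 := by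
  unfold Φ
  have e1 : E (n+1) 1 = E n 0 := by
    unfold E; congr 1; push_cast; ring
  have e2 : n + E n 1 = E n 0 + 1 := by
    have h1 := Ecast n 1; have h2 := Ecast n 0
    push_cast at h1 h2
    have : (E n 1 : ℤ) * 2 + 2*(n:ℤ) = (E n 0 : ℤ)*2 + 2 := by linear_combination h1 - h2
    omega
  have hx : (X:Polynomial ℤ)^(n + E n 1) = X^(E n 0 + 1) := by rw [e2]
  rw [show 2*(n+1) = 2*n+2 from by ring, e1, pow_add] at *
  simp only [gb_zero_right]
  linear_combination ((-1:Polynomial ℤ)^n * X^(E n 0)) * gb_one_step n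
    - ((-1:Polynomial ℤ)^n * gb (2*n) 1) * hx

lemma key2 (n k : ℕ) : Φ (n+1) (k+2)
    = -(X^n) * Φ n (k+2) + (1 + X^(2*n+1)) * Φ n (k+1) - X^(n+1) * Φ n k := by
  unfold Φ
  have e2 : E n (k+1) = E (n+1) (k+2) := by
    unfold E; congr 1; push_cast; ring
  rcases le_or_gt k (2*n) with hk | hk
  · have f1 : n + E n (k+2) = E (n+1) (k+2) + (k+2) := by
      have h1 := Ecast n (k+2); have h2 := Ecast (n+1) (k+2)
      push_cast at h1 h2
      have : (E n (k+2) : ℤ)*2 + 2*(n:ℤ) = (E (n+1) (k+2) : ℤ)*2 + 2*(k:ℤ)+4 := by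
        linear_combination h1 - h2
      omega
    have f3 : (n+1) + E n k = E (n+1) (k+2) + (2*n - k) := by
      have h1 := Ecast n k; have h2 := Ecast (n+1) (k+2)
      push_cast at h1 h2
      have : (E n k : ℤ)*2 + 2*(n:ℤ) + 2 = (E (n+1) (k+2) : ℤ)*2 + 2*(2*(n:ℤ) - k) := by
        linear_combination h1 - h2
      omega
    have hx1 : (X:Polynomial ℤ)^(n + E n (k+2)) = X^(E (n+1) (k+2) + (k+2)) := by rw [f1]
    have hx3 : (X:Polynomial ℤ)^((n+1) + E n k) = X^(E (n+1) (k+2) + (2*n - k)) := by rw [f3]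
    rw [show 2*(n+1) = 2*n+2 from by ring, e2]
    linear_combination ((-1:Polynomial ℤ)^(n+k+1) * X^(E (n+1) (k+2))) * gb_G2 n k
      + ((-1:Polynomial ℤ)^(n+k) * gb (2*n) (k+2)) * hx1
      + ((-1:Polynomial ℤ)^(n+k) * gb (2*n) k) * hx3
  · have z1 : gb (2*n) (k+2) = 0 := gb_eq_zero (by omega)
    have z2 : gb (2*n) (k+1) = 0 := gb_eq_zero (by omega)
    have z3 : gb (2*n) k = 0 := gb_eq_zero (by omega)
    have z4 : gb (2*(n+1)) (k+2) = 0 := gb_eq_zero (by omega)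
    rw [z1, z2, z3, z4]
    ring

lemma Φ_zero {n k : ℕ} (h : 2*n < k) : Φ n k = 0 := by
  unfold Φ; rw [gb_eq_zero h]; ring

lemma Φ00 : Φ 0 0 = 1 := by
  unfold Φ
  have h1 : gb 0 0 = 1 := rfl
  have h2 : E 0 0 = 0 := by
    have := Ecast 0 0; omega
  rw [h1, h2]
  ring

def A (n : ℕ) : Polynomial ℤ := ∑ k ∈ range (2*n+1), Φ n k
def B (n : ℕ) : Polynomial ℤ := ∑ k ∈ range (2*n+1), (k : Polynomial ℤ) * Φ n k

lemma A_ext (n m : ℕ) (h : 2*n+1 ≤ m) : ∑ k ∈ range m, Φ n k = A n := by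
  unfold A
  rw [← Finset.sum_subset (Finset.range_subset_range.2 h)]
  intro x _ hx
  exact Φ_zero (by simp at hx ⊢; omega)

lemma B_ext (n m : ℕ) (h : 2*n+1 ≤ m) :
    ∑ k ∈ range m, (k : Polynomial ℤ) * Φ n k = B n := by
  unfold B
  rw [← Finset.sum_subset (Finset.range_subset_range.2 h)]
  intro x _ hx
  rw [Φ_zero (by simp at hx ⊢; omega), mul_zero]

lemma A_succ (n : ℕ) : A (n+1) = ((1 - X^n) * (1 - X^(n+1))) * A n := by
  have expand : A (n+1) = ∑ k ∈ range (2*n+1), Φ (n+1) (k+2) + Φ (n+1) 1 + Φ (n+1) 0 := by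
    unfold A
    rw [show 2*(n+1)+1 = (2*n+2)+1 from by ring, sum_range_succ']
    rw [show 2*n+2 = (2*n+1)+1 from rfl, sum_range_succ']
  have hS2 : ∑ k ∈ range (2*n+1), Φ n (k+2) = A n - Φ n 1 - Φ n 0 := by
    have h3 : ∑ k ∈ range (2*n+3), Φ n k = A n := A_ext n _ (by omega)
    rw [show 2*n+3 = (2*n+2)+1 from rfl, sum_range_succ',
      show 2*n+2 = (2*n+1)+1 from rfl, sum_range_succ'] at h3
    linear_combination h3
  have hS1 : ∑ k ∈ range (2*n+1), Φ n (k+1) = A n - Φ n 0 := by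
    have h2 : ∑ k ∈ range (2*n+2), Φ n k = A n := A_ext n _ (by omega)
    rw [show 2*n+2 = (2*n+1)+1 from rfl, sum_range_succ'] at h2
    linear_combination h2
  rw [expand]
  have : ∑ k ∈ range (2*n+1), Φ (n+1) (k+2)
      = -(X^n) * (∑ k ∈ range (2*n+1), Φ n (k+2))
        + (1 + X^(2*n+1)) * (∑ k ∈ range (2*n+1), Φ n (k+1))
        - X^(n+1) * (∑ k ∈ range (2*n+1), Φ n k) := by
    rw [Finset.mul_sum, Finset.mul_sum, Finset.mul_sum, ← Finset.sum_add_distrib,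
      ← Finset.sum_sub_distrib]
    exact Finset.sum_congr rfl fun k _ => key2 n k
  rw [this, hS2, hS1, key1, key0]
  show _ = ((1 - X^n) * (1 - X^(n+1))) * A n
  have hA : ∑ k ∈ range (2*n+1), Φ n k = A n := rfl
  rw [hA]
  ring

lemma B_succ (n : ℕ) :
    B (n+1) = ((1 - X^n) * (1 - X^(n+1))) * B n + (1 + X^(2*n+1) - 2*X^(n+1)) * A n := by
  have expand : B (n+1) = ∑ k ∈ range (2*n+1), ((k:Polynomial ℤ)+2) * Φ (n+1) (k+2)
      + Φ (n+1) 1 := by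
    unfold B
    rw [show 2*(n+1)+1 = (2*n+2)+1 from by ring, sum_range_succ']
    rw [show 2*n+2 = (2*n+1)+1 from rfl, sum_range_succ']
    push_cast
    simp
    exact Finset.sum_congr rfl fun k _ => by push_cast; ring
  have hW2 : ∑ k ∈ range (2*n+1), ((k:Polynomial ℤ)+2) * Φ n (k+2) = B n - Φ n 1 := by
    have h3 : ∑ k ∈ range (2*n+3), (k : Polynomial ℤ) * Φ n k = B n := B_ext n _ (by omega)
    rw [show 2*n+3 = (2*n+2)+1 from rfl, sum_range_succ',
      show 2*n+2 = (2*n+1)+1 from rfl, sum_range_succ'] at h3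
    push_cast at h3
    simp at h3
    rw [← h3]
    rw [show ∑ k ∈ range (2*n+1), ((k:Polynomial ℤ)+1+1) * Φ n (k+1+1)
      = ∑ k ∈ range (2*n+1), ((k:Polynomial ℤ)+2) * Φ n (k+2) from
      Finset.sum_congr rfl fun k _ => by rw [show k+1+1 = k+2 from rfl]; ring]
    ring
  have hW1a : ∑ k ∈ range (2*n+1), ((k:Polynomial ℤ)+1) * Φ n (k+1) = B n := by
    have h2 : ∑ k ∈ range (2*n+2), (k : Polynomial ℤ) * Φ n k = B n := B_ext n _ (by omega)
    rw [show 2*n+2 = (2*n+1)+1 from rfl, sum_range_succ'] at h2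
    push_cast at h2
    simp at h2
    rw [← h2]
  have hS1 : ∑ k ∈ range (2*n+1), Φ n (k+1) = A n - Φ n 0 := by
    have h2 : ∑ k ∈ range (2*n+2), Φ n k = A n := A_ext n _ (by omega)
    rw [show 2*n+2 = (2*n+1)+1 from rfl, sum_range_succ'] at h2
    linear_combination h2
  have hA : ∑ k ∈ range (2*n+1), Φ n k = A n := rfl
  have hB : ∑ k ∈ range (2*n+1), (k:Polynomial ℤ) * Φ n k = B n := rfl
  rw [expand]
  have split : ∑ k ∈ range (2*n+1), ((k:Polynomial ℤ)+2) * Φ (n+1) (k+2)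
      = -(X^n) * (∑ k ∈ range (2*n+1), ((k:Polynomial ℤ)+2) * Φ n (k+2))
        + (1 + X^(2*n+1)) * (∑ k ∈ range (2*n+1), ((k:Polynomial ℤ)+1) * Φ n (k+1))
        + (1 + X^(2*n+1)) * (∑ k ∈ range (2*n+1), Φ n (k+1))
        - X^(n+1) * (∑ k ∈ range (2*n+1), (k:Polynomial ℤ) * Φ n k)
        - 2 * X^(n+1) * (∑ k ∈ range (2*n+1), Φ n k) := by
    rw [Finset.mul_sum, Finset.mul_sum, Finset.mul_sum, Finset.mul_sum, Finset.mul_sum,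
      ← Finset.sum_add_distrib, ← Finset.sum_add_distrib, ← Finset.sum_sub_distrib,
      ← Finset.sum_sub_distrib]
    refine Finset.sum_congr rfl fun k _ => ?_
    rw [key2]
    ring
  rw [split, hW2, hW1a, hS1, hA, hB, key1]
  ring

def pxI (a b : ℕ) : Polynomial ℤ := ∏ i ∈ Ico a b, (1 - X ^ (i+1))

lemma px_pxI (a b : ℕ) (h : a ≤ b) : px a * pxI a b = px b := by
  unfold px pxI
  rw [range_eq_Ico, range_eq_Ico]
  exact Finset.prod_Ico_consecutive (fun i => (1 - X ^ (i+1) : Polynomial ℤ)) (Nat.zero_le a) h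

/-- `f` is `1` modulo `X^(m+1)`. -/
def near1 (m : ℕ) (f : Polynomial ℤ) : Prop := ∃ g, f = 1 + X^(m+1) * g

lemma near1_pxI (a b : ℕ) : near1 a (pxI a b) := by
  induction b with
  | zero => exact ⟨0, by simp [pxI]⟩
  | succ b ih =>
    rcases le_or_gt a b with h | h
    · obtain ⟨g, hg⟩ := ih
      refine ⟨g - X^(b-a) * (1 + X^(a+1) * g), ?_⟩
      have hx : (X:Polynomial ℤ)^(a+1) * X^(b-a) = X^(b+1) := by
        rw [← pow_add]; congr 1; omega
      unfold pxI
      rw [Finset.prod_Ico_succ_top (by omega)]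
      have : (∏ i ∈ Ico a b, (1 - X ^ (i+1)) : Polynomial ℤ) = pxI a b := rfl
      rw [this, hg]
      linear_combination (1 + X^(a+1)*g) * hx
    · refine ⟨0, ?_⟩
      unfold pxI
      rw [Finset.Ico_eq_empty (by omega)]
      simp
lemma near1_mul {m : ℕ} {f f' : Polynomial ℤ} (h : near1 m f) (h' : near1 m f') :
    near1 m (f * f') := by
  obtain ⟨g, hg⟩ := h; obtain ⟨g', hg'⟩ := h'
  exact ⟨g + g' + X^(m+1) * (g * g'), by rw [hg, hg']; ring⟩
lemma near1_mono {m m' : ℕ} (h : m' ≤ m) {f : Polynomial ℤ} (hf : near1 m f) :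
    near1 m' f := by
  obtain ⟨g, hg⟩ := hf
  refine ⟨X^(m-m') * g, ?_⟩
  rw [hg, ← mul_assoc, ← pow_add]
  congr 3
  omega
lemma near1_coeff {m : ℕ} {f : Polynomial ℤ} (h : near1 m f) {t : ℕ} (ht : t ≤ m) :
    f.coeff t = if t = 0 then 1 else 0 := by
  obtain ⟨g, hg⟩ := h
  rw [hg, coeff_add, mul_comm, coeff_mul_X_pow', if_neg (by omega), add_zero, coeff_one]

lemma pxgb_near (n k : ℕ) (h : k ≤ 2*n) :
    near1 (min k (2*n - k)) (px n * gb (2*n) k) := by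
  rcases le_or_gt k n with hk | hk
  · have key : px n * gb (2*n) k = pxI k n * pxI (2*n-k) (2*n) := by
      have hc : px k * px (2*n - k) ≠ 0 := mul_ne_zero (px_ne_zero _) (px_ne_zero _)
      apply mul_left_cancel₀ hc
      have h1 : px k * pxI k n = px n := px_pxI _ _ hk
      have h2 : px (2*n-k) * pxI (2*n-k) (2*n) = px (2*n) := px_pxI _ _ (by omega)
      have h3 := px_gb (2*n) k h
      calc px k * px (2*n-k) * (px n * gb (2*n) k)
          = px n * (px k * px (2*n-k) * gb (2*n) k) := by ring
        _ = px n * px (2*n) := by rw [h3]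
        _ = (px k * pxI k n) * (px (2*n-k) * pxI (2*n-k) (2*n)) := by rw [h1, h2]
        _ = px k * px (2*n-k) * (pxI k n * pxI (2*n-k) (2*n)) := by ring
    rw [key]
    exact near1_mul (near1_mono (by omega) (near1_pxI k n))
      (near1_mono (by omega) (near1_pxI (2*n-k) (2*n)))
  · have key : px n * gb (2*n) k = pxI (2*n-k) n * pxI k (2*n) := by
      have hc : px k * px (2*n - k) ≠ 0 := mul_ne_zero (px_ne_zero _) (px_ne_zero _)
      apply mul_left_cancel₀ hc
      have h1 : px (2*n-k) * pxI (2*n-k) n = px n := px_pxI _ _ (by omega)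
      have h2 : px k * pxI k (2*n) = px (2*n) := px_pxI _ _ h
      have h3 := px_gb (2*n) k h
      calc px k * px (2*n-k) * (px n * gb (2*n) k)
          = px n * (px k * px (2*n-k) * gb (2*n) k) := by ring
        _ = px n * px (2*n) := by rw [h3]
        _ = (px (2*n-k) * pxI (2*n-k) n) * (px k * pxI k (2*n)) := by rw [h1, h2]
        _ = px k * px (2*n-k) * (pxI (2*n-k) n * pxI k (2*n)) := by ring
    rw [key]
    exact near1_mul (near1_mono (by omega) (near1_pxI (2*n-k) n))
      (near1_mono (by omega) (near1_pxI k (2*n)))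

lemma A_zero : A 0 = 1 := by
  unfold A
  rw [show 2*0+1 = 1 from rfl, Finset.sum_range_one, Φ00]

lemma B_zero : B 0 = 0 := by
  unfold B
  rw [show 2*0+1 = 1 from rfl, Finset.sum_range_one]
  simp

lemma A_pos (n : ℕ) : A (n+1) = 0 := by
  induction n with
  | zero => rw [A_succ 0]; simp
  | succ n ih => rw [A_succ (n+1), ih, mul_zero]

lemma B_eq (n : ℕ) : B (n+1) = px (n+1) * px n := by
  induction n with
  | zero =>
    rw [B_succ 0, B_zero, A_zero]
    have h1 : px 1 = 1 - X := by
      unfold px; rw [Finset.prod_range_one]; norm_num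
    have h0 : px 0 = 1 := rfl
    rw [h1, h0]
    ring
  | succ n ih =>
    rw [B_succ (n+1), ih, A_pos n, px_succ (n+1), px_succ n]
    ring

lemma coeff_mul_one_sub (f : Polynomial ℤ) (c t : ℕ) (h : t < c) :
    (f * (1 - X^c)).coeff t = f.coeff t := by
  have e : f * (1 - X^c) = f - f * X^c := by ring
  rw [e, coeff_sub, coeff_mul_X_pow', if_neg (by omega), sub_zero]

lemma cube_stable (t : ℕ) : ∀ M, t ≤ M → ((px M)^3).coeff t = ((px t)^3).coeff t := by
  intro M
  induction M with
  | zero => intro h; rw [Nat.le_zero.mp h]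
  | succ M ih =>
    intro h
    rcases Nat.eq_or_lt_of_le h with h' | h'
    · rw [h']
    · have hM : t ≤ M := by omega
      have e : (px (M+1))^3 = (((px M)^3 * (1 - X^(M+1))) * (1 - X^(M+1))) * (1 - X^(M+1)) := by
        rw [px_succ]; ring
      rw [e, coeff_mul_one_sub _ _ _ (by omega), coeff_mul_one_sub _ _ _ (by omega),
        coeff_mul_one_sub _ _ _ (by omega), ih hM]

def fJ (t n k : ℕ) : ℤ := if t = E n k then (-1:ℤ)^(n+k) * (k:ℤ) else 0

theorem cube_coeff_dvd (p t M : ℕ) (hp : Nat.Prime p) (hp5 : 5 ≤ p) (htM : t ≤ M)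
    (hT : ∀ d : ℤ, 2*(t:ℤ) = d*(d+1) → (p:ℤ) ∣ (2*d+1)) :
    (p:ℤ) ∣ ((px M)^3).coeff t := by
  set m := 3*t+2 with hm
  set n := m+1 with hn
  have per : ∀ k, k ≤ 2*n → (px n * ((k:Polynomial ℤ) * Φ n k)).coeff t = fJ t n k := by
    intro k hk
    have rearr : px n * ((k:Polynomial ℤ) * Φ n k)
        = C ((-1:ℤ)^(n+k) * (k:ℤ)) * ((px n * gb (2*n) k) * X^(E n k)) := by
      rw [map_mul, map_pow, map_neg, map_one, C_eq_natCast]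
      unfold Φ
      ring
    rw [rearr, coeff_C_mul, coeff_mul_X_pow']
    unfold fJ
    by_cases he : E n k ≤ t
    · have h2e := Ecast n k
      have hEt : (E n k : ℤ) ≤ (t:ℤ) := by exact_mod_cast he
      have hd1 : (k:ℤ) - n ≤ 2*t+1 := by nlinarith
      have hd2 : -(2*(t:ℤ)+2) < (k:ℤ) - n := by nlinarith
      have hmin : t - E n k ≤ min k (2*n - k) := by omega
      rw [if_pos he, near1_coeff (pxgb_near n k hk) hmin]
      by_cases hi : t = E n k
      · rw [if_pos (by omega), if_pos hi]
        ring
      · rw [if_neg (by omega), if_neg hi, mul_zero]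
    · rw [if_neg he, if_neg (by omega), mul_zero]
  have coeff_eq : ((px n)^2 * px m).coeff t = ∑ k ∈ range (2*n+1), fJ t n k := by
    have h1 : (px n)^2 * px m = px n * B n := by
      rw [B_eq m]; ring
    have h2 : px n * B n = ∑ k ∈ range (2*n+1), px n * ((k:Polynomial ℤ) * Φ n k) := by
      unfold B; rw [Finset.mul_sum]
    rw [h1, h2, finset_sum_coeff]
    exact Finset.sum_congr rfl fun k hk => per k (by simp at hk; omega)
  have ftop : fJ t n (2*n) = 0 := by
    have h2e := Ecast n (2*n)
    have hne : ¬ (t = E n (2*n)) := by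
      intro h
      have hc : ((2*n:ℕ):ℤ) - n = n := by push_cast; ring
      rw [hc] at h2e
      have hv : (t:ℤ)*2 = n*(n+1) := by rw [h]; exact_mod_cast h2e
      have hn3 : (n:ℤ) = 3*(t:ℤ)+3 := by rw [hn, hm]; push_cast; ring
      nlinarith [hv, hn3]
    unfold fJ
    rw [if_neg hne]
  have pair : ∀ jj ∈ range (2*n), (p:ℤ) ∣ (fJ t n (2*n-1-jj) + fJ t n jj) := by
    intro jj hj
    have hjlt : jj < 2*n := by simpa using hj
    have hEE : E n (2*n-1-jj) = E n jj := by
      have a := Ecast n jj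
      have b := Ecast n (2*n-1-jj)
      have hc : ((2*n-1-jj : ℕ) : ℤ) = 2*(n:ℤ)-1-jj := by omega
      rw [hc] at b
      have : (E n (2*n-1-jj) : ℤ) * 2 = (E n jj : ℤ) * 2 := by linear_combination b - a
      omega
    by_cases hi : t = E n jj
    · have ht' : (t:ℤ) = (E n jj : ℤ) := by exact_mod_cast hi
      have hdvd : (p:ℤ) ∣ (2*((jj:ℤ) - n)+1) := by
        apply hT
        have a := Ecast n jj
        linear_combination a + 2*ht'
      have hsign : (-1:ℤ)^(n+(2*n-1-jj)) = -(-1:ℤ)^(n+jj) := by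
        have h1 : (-1:ℤ)^(n+(2*n-1-jj)) * (-1:ℤ)^(n+jj) = -1 := by
          rw [← pow_add, show (n+(2*n-1-jj))+(n+jj) = 2*(2*n-1)+1 from by omega]
          exact Odd.neg_one_pow ⟨2*n-1, rfl⟩
        have h2 : (-1:ℤ)^(n+jj) * (-1:ℤ)^(n+jj) = 1 := by
          rw [← pow_add]
          exact Even.neg_one_pow ⟨n+jj, rfl⟩
        linear_combination (-1:ℤ)^(n+jj) * h1 - (-1:ℤ)^(n+(2*n-1-jj)) * h2
      have hval : fJ t n (2*n-1-jj) + fJ t n jj = (-1:ℤ)^(n+jj) * (2*((jj:ℤ)-n)+1) := by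
        unfold fJ
        rw [if_pos (by rw [hEE]; exact hi), if_pos hi, hsign]
        have hc : ((2*n-1-jj:ℕ):ℤ) = 2*(n:ℤ)-1-jj := by omega
        rw [hc]
        ring
      rw [hval]
      exact Dvd.dvd.mul_left hdvd _
    · unfold fJ
      rw [if_neg (by rw [hEE]; exact hi), if_neg hi, add_zero]
      exact dvd_zero _
  have hsum : (p:ℤ) ∣ ∑ jj ∈ range (2*n), (fJ t n (2*n-1-jj) + fJ t n jj) :=
    Finset.dvd_sum pair
  have hrefl : ∑ jj ∈ range (2*n), fJ t n (2*n-1-jj) = ∑ jj ∈ range (2*n), fJ t n jj :=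
    Finset.sum_range_reflect (fJ t n) (2*n)
  have h2S : ∑ jj ∈ range (2*n), (fJ t n (2*n-1-jj) + fJ t n jj)
      = 2 * ∑ jj ∈ range (2*n), fJ t n jj := by
    rw [Finset.sum_add_distrib, hrefl]
    ring
  have hS : (p:ℤ) ∣ ∑ jj ∈ range (2*n), fJ t n jj := by
    rw [h2S] at hsum
    rcases Int.Prime.dvd_mul' hp hsum with h | h
    · exfalso
      have : (p:ℕ) ∣ 2 := by exact_mod_cast h
      have := Nat.le_of_dvd (by norm_num) this
      omega
    · exact h
  have htot : ((px n)^2 * px m).coeff t = ∑ jj ∈ range (2*n), fJ t n jj := by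
    rw [coeff_eq, Finset.sum_range_succ, ftop, add_zero]
  have hcube_n : (p:ℤ) ∣ ((px n)^3).coeff t := by
    have e : (px n)^3 = ((px n)^2 * px m) * (1 - X^(m+1)) := by
      rw [hn, px_succ m]
      ring
    rw [e, coeff_mul_one_sub _ _ _ (by omega), htot]
    exact hS
  have final : ((px M)^3).coeff t = ((px n)^3).coeff t := by
    rw [cube_stable t M htM, cube_stable t n (by omega)]
  rw [final]
  exact hcube_n


end Jac
end PartOne

noncomputable section PartTwo
open PowerSeries Finset
namespace Jac2

variable {R : Type*} [CommRing R] {S' : Type*} [CommRing S']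

def ivs (c : ℕ) : R⟦X⟧ := PowerSeries.invOfUnit (1 - X^c) 1

lemma inv_uniq {a b c : R⟦X⟧} (h1 : a*b = 1) (h2 : a*c = 1) : b = c := by
  calc b = b * (a*c) := by rw [h2, mul_one]
    _ = (a*b)*c := by ring
    _ = c := by rw [h1, one_mul]

lemma ivs_mul {c : ℕ} (hc : c ≠ 0) : (1 - X^c) * (ivs c : R⟦X⟧) = 1 := by
  apply PowerSeries.mul_invOfUnit
  simp [zero_pow hc]

lemma map_ivs (f : R →+* S') {c : ℕ} (hc : c ≠ 0) :
    PowerSeries.map f (ivs c) = (ivs c : S'⟦X⟧) := by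
  apply inv_uniq (a := 1 - X^c)
  · have := congrArg (PowerSeries.map f) (ivs_mul (R := R) hc)
    simpa [map_mul] using this
  · exact ivs_mul hc

lemma ivs_eq_mk {c : ℕ} (hc : c ≠ 0) :
    (ivs c : R⟦X⟧) = PowerSeries.mk (fun i => if c ∣ i then (1:R) else 0) := by
  apply inv_uniq (a := 1 - X^c) (ivs_mul hc)
  ext i
  rw [sub_mul, one_mul, map_sub, coeff_X_pow_mul']
  simp only [coeff_mk, coeff_one]
  by_cases h0 : i = 0
  · subst h0
    simp [Nat.le_zero, hc]
  · rw [if_neg h0]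
    by_cases hd : c ∣ i
    · have hci : c ≤ i := Nat.le_of_dvd (Nat.pos_of_ne_zero h0) hd
      rw [if_pos hd, if_pos hci, if_pos (Nat.dvd_sub hd dvd_rfl)]
      ring
    · by_cases hci : c ≤ i
      · rw [if_neg hd, if_pos hci, if_neg (fun h => hd ?_), sub_zero]
        have := Nat.dvd_add h (dvd_refl c)
        rwa [Nat.sub_add_cancel hci] at this
      · rw [if_neg hd, if_neg hci]
        ring

section charp
variable (p : ℕ) [Fact (Nat.Prime p)] [CharP R p]

instance : CharP R⟦X⟧ p := ⟨fun n => by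
  rw [← CharP.cast_eq_zero_iff R p n, ← map_natCast (PowerSeries.C (R := R)) n]
  constructor
  · intro h
    have := congrArg (PowerSeries.constantCoeff (R := R)) h
    simpa using this
  · intro h
    rw [h, map_zero]⟩

lemma ivs_pow_p {c : ℕ} (hc : c ≠ 0) : (ivs c : R⟦X⟧)^p = ivs (c*p) := by
  have hp0 : p ≠ 0 := (Fact.out : Nat.Prime p).ne_zero
  apply inv_uniq (a := 1 - X^(c*p))
  · have e : ((1 : R⟦X⟧) - X^(c*p)) = (1 - X^c)^p := by
      rw [sub_pow_char, one_pow, ← pow_mul]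
    rw [e, ← mul_pow, ivs_mul hc, one_pow]
  · exact ivs_mul (by positivity)

lemma ivs_pow_pm3 {c : ℕ} (hc : c ≠ 0) (hp3 : 3 ≤ p) :
    (ivs c : R⟦X⟧)^(p-3) = ivs (c*p) * (1 - X^c)^3 := by
  have hp0 : p ≠ 0 := (Fact.out : Nat.Prime p).ne_zero
  apply inv_uniq (a := (1 - X^c)^(p-3))
  · rw [← mul_pow, ivs_mul hc, one_pow]
  · have e : ((1:R⟦X⟧) - X^c)^(p-3) * (ivs (c*p) * (1 - X^c)^3)
        = ivs (c*p) * (1 - X^c)^p := by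
      rw [show ((1:R⟦X⟧) - X^c)^(p-3) * (ivs (c*p) * (1 - X^c)^3)
        = ivs (c*p) * ((1 - X^c)^(p-3) * (1 - X^c)^3) from by ring, ← pow_add,
        show p - 3 + 3 = p from by omega]
    rw [e, sub_pow_char, one_pow, ← pow_mul, mul_comm (ivs (c*p)), ivs_mul (by positivity)]
end charp

def pdiv (p : ℕ) (f : R⟦X⟧) : Prop := ∀ i : ℕ, ¬ p ∣ i → PowerSeries.coeff (R := R) i f = 0

lemma pdiv_one (p : ℕ) : pdiv p (1 : R⟦X⟧) := by
  intro i hi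
  rw [coeff_one, if_neg (by rintro rfl; exact hi (dvd_zero p))]

lemma pdiv_mul {p : ℕ} {f g : R⟦X⟧} (hf : pdiv p f) (hg : pdiv p g) : pdiv p (f*g) := by
  intro i hi
  rw [coeff_mul]
  apply Finset.sum_eq_zero
  rintro ⟨a, b⟩ hab
  rw [Finset.HasAntidiagonal.mem_antidiagonal] at hab
  by_cases ha : p ∣ a
  · rw [hg b (fun hb => hi (hab ▸ Nat.dvd_add ha hb)), mul_zero]
  · rw [hf a ha, zero_mul]

lemma pdiv_pow {p : ℕ} {f : R⟦X⟧} (hf : pdiv p f) (e : ℕ) (he : e ≠ 0 ∨ True) :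
    pdiv p (f^e) := by
  induction e with
  | zero => simpa using pdiv_one p
  | succ e ih => rw [pow_succ]; exact pdiv_mul (ih (Or.inr trivial)) hf

lemma pdiv_prod {p : ℕ} {ι : Type*} (s : Finset ι) (F : ι → R⟦X⟧)
    (h : ∀ i ∈ s, pdiv p (F i)) : pdiv p (∏ i ∈ s, F i) := by
  classical
  induction s using Finset.induction_on with
  | empty => simpa using pdiv_one p
  | insert _ _ hnotmem ih =>
    rw [Finset.prod_insert hnotmem]
    exact pdiv_mul (h _ (Finset.mem_insert_self _ _))
      (ih fun i hi => h i (Finset.mem_insert_of_mem hi))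

lemma pdiv_ivs {R : Type} [CommRing R] {p c : ℕ} (hc : c*p ≠ 0) :
    pdiv p (ivs (c*p) : R⟦X⟧) := by
  intro i hi
  rw [ivs_eq_mk hc, coeff_mk, if_neg (fun h => hi (dvd_trans (dvd_mul_left p c) h))]

end Jac2
end PartTwo

section Main
open PowerSeries Finset Jac2

theorem stmt8 (p : ℕ) (hp : p.Prime) (hp5 : 5 ≤ p)
    (r : ℕ) (hr1 : 1 ≤ r) (hr2 : r ≤ p - 1) (hdvd : p ∣ 4 * r + 1)
    (n j k : ℕ) (hjk : j ≤ k) :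
    colorPart (p * (k - j) + (p - 3)) (p * k + p) (p * n + r) ≡ 0 [ZMOD p] := by
  haveI : Fact (Nat.Prime p) := ⟨hp⟩
  refine Int.modEq_zero_iff_dvd.2 ?_
  rw [← ZMod.intCast_zmod_eq_zero_iff_dvd]
  set e := p * (k - j) + (p - 3) with he
  set s := p * k + p with hs
  set N := p * n + r with hN
  have φcast : ((colorPart e s N : ℤ) : ZMod p)
      = PowerSeries.coeff (R := ZMod p) N (PowerSeries.map (Int.castRingHom (ZMod p))
        (∏ m ∈ Finset.range (N + 1),
          (PowerSeries.invOfUnit (1 - PowerSeries.X ^ (2 * m + 1)) 1) ^ s *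
          (PowerSeries.invOfUnit (1 - PowerSeries.X ^ (2 * m + 2)) 1) ^ e)) := by
    rw [PowerSeries.coeff_map]
    rfl
  rw [φcast, map_prod]
  have hmap : ∀ m ∈ Finset.range (N+1),
      PowerSeries.map (Int.castRingHom (ZMod p))
        ((PowerSeries.invOfUnit (1 - PowerSeries.X ^ (2 * m + 1)) 1) ^ s *
          (PowerSeries.invOfUnit (1 - PowerSeries.X ^ (2 * m + 2)) 1) ^ e)
      = ((ivs ((2*m+1)*p))^(k+1) * (ivs ((2*m+2)*p))^(k-j+1))
          * ((1 - X^(2*m+2))^3 : (ZMod p)⟦X⟧) := by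
    intro m _
    have hmo : (2*m+1) ≠ 0 := by omega
    have hme : (2*m+2) ≠ 0 := by omega
    rw [map_mul, map_pow, map_pow]
    have e1 : PowerSeries.map (Int.castRingHom (ZMod p))
        (PowerSeries.invOfUnit (1 - PowerSeries.X ^ (2 * m + 1)) 1) = ivs (2*m+1) :=
      map_ivs _ hmo
    have e2 : PowerSeries.map (Int.castRingHom (ZMod p))
        (PowerSeries.invOfUnit (1 - PowerSeries.X ^ (2 * m + 2)) 1) = ivs (2*m+2) :=
      map_ivs _ hme
    rw [e1, e2]
    have hs' : (ivs (2*m+1) : (ZMod p)⟦X⟧)^s = (ivs ((2*m+1)*p))^(k+1) := by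
      rw [hs, show p*k+p = p*(k+1) from by ring, pow_mul, ivs_pow_p p hmo]
    have he' : (ivs (2*m+2) : (ZMod p)⟦X⟧)^e
        = (ivs ((2*m+2)*p))^(k-j+1) * (1 - X^(2*m+2))^3 := by
      rw [he, pow_add, pow_mul, ivs_pow_p p hme, ivs_pow_pm3 p hme (by omega)]
      rw [pow_succ]
      ring
    rw [hs', he']
    ring
  rw [Finset.prod_congr rfl hmap, Finset.prod_mul_distrib]
  set Apart := ∏ m ∈ Finset.range (N+1),
    ((ivs ((2*m+1)*p) : (ZMod p)⟦X⟧)^(k+1) * (ivs ((2*m+2)*p))^(k-j+1)) with hA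
  set Bpart := ∏ m ∈ Finset.range (N+1), ((1 - X^(2*m+2))^3 : (ZMod p)⟦X⟧) with hB
  -- A-part is supported on multiples of p
  have hApdiv : pdiv p Apart := by
    apply pdiv_prod
    intro m _
    exact pdiv_mul (pdiv_pow (pdiv_ivs (by positivity)) _ (Or.inr trivial))
      (pdiv_pow (pdiv_ivs (by positivity)) _ (Or.inr trivial))
  -- B-part coefficients
  have hBcoeff : ∀ v : ℕ, PowerSeries.coeff (R := ZMod p) v Bpart
      = if 2 ∣ v then ((((Jac.px (N+1))^3).coeff (v/2) : ℤ) : ZMod p) else 0 := by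
    have hexp : Polynomial.expand ℤ 2 ((Jac.px (N+1))^3)
        = ∏ m ∈ Finset.range (N+1), ((1:Polynomial ℤ) - Polynomial.X^(2*m+2))^3 := by
      unfold Jac.px
      rw [← Finset.prod_pow, map_prod]
      refine Finset.prod_congr rfl fun i _ => ?_
      rw [map_pow, map_sub, map_one, map_pow, Polynomial.expand_X, ← pow_mul]
      congr 2
    have hQprod : Polynomial.map (Int.castRingHom (ZMod p))
          (Polynomial.expand ℤ 2 ((Jac.px (N+1))^3))
        = ∏ m ∈ Finset.range (N+1), ((1:Polynomial (ZMod p)) - Polynomial.X^(2*m+2))^3 := by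
      rw [hexp, Polynomial.map_prod]
      refine Finset.prod_congr rfl fun i _ => ?_
      rw [Polynomial.map_pow, Polynomial.map_sub, Polynomial.map_one, Polynomial.map_pow,
        Polynomial.map_X]
    have hcoe : ((Polynomial.map (Int.castRingHom (ZMod p))
          (Polynomial.expand ℤ 2 ((Jac.px (N+1))^3)) : Polynomial (ZMod p)) :
            (ZMod p)⟦X⟧) = Bpart := by
      rw [hQprod, hB]
      rw [← Polynomial.coeToPowerSeries.ringHom_apply, map_prod]
      refine Finset.prod_congr rfl fun i _ => ?_
      rw [map_pow, map_sub, map_one, map_pow]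
      rw [Polynomial.coeToPowerSeries.ringHom_apply, Polynomial.coe_X]
    intro v
    rw [← hcoe, Polynomial.coeff_coe, Polynomial.coeff_map,
      Polynomial.coeff_expand (by norm_num : 0 < 2), apply_ite (Int.castRingHom (ZMod p)),
      map_zero]
    rfl
  -- now compute the coefficient
  rw [PowerSeries.coeff_mul]
  apply Finset.sum_eq_zero
  rintro ⟨u, v⟩ hab
  rw [Finset.HasAntidiagonal.mem_antidiagonal] at hab
  by_cases hu : p ∣ u
  · -- show B-coefficient vanishes
    have hBv : PowerSeries.coeff (R := ZMod p) v Bpart = 0 := by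
      rw [hBcoeff v]
      by_cases h2 : 2 ∣ v
      · rw [if_pos h2, ZMod.intCast_zmod_eq_zero_iff_dvd]
        apply Jac.cube_coeff_dvd p (v/2) (N+1) hp hp5 (by omega)
        intro d hd
        -- p ∣ 4v+1
        have hz : (u:ℤ) + v = (p:ℤ)*n + r := by exact_mod_cast hab.trans hN
        obtain ⟨u', hu'⟩ := hu
        obtain ⟨a, ha⟩ := hdvd
        have hu'' : (u:ℤ) = (p:ℤ)*u' := by exact_mod_cast hu'
        have ha' : 4*(r:ℤ)+1 = (p:ℤ)*a := by exact_mod_cast ha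
        have h4v : (p:ℤ) ∣ 4*(v:ℤ)+1 := by
          refine ⟨4*n + a - 4*u', ?_⟩
          linear_combination 4*hz - 4*hu'' + ha'
        have h2' : ((v/2:ℕ):ℤ)*2 = v := by
          obtain ⟨w, hw⟩ := h2
          subst hw
          push_cast [Nat.mul_div_cancel_left w (by norm_num : 0 < 2)]
          ring
        have hsq : (p:ℤ) ∣ (2*d+1)*(2*d+1) := by
          have hgoal : (2*d+1)*(2*d+1) = 4*(v:ℤ)+1 := by
            linear_combination (-4)*hd + 4*h2'
          rw [hgoal]
          exact h4v
        rcases Int.Prime.dvd_mul' hp hsq with h | h <;> exact h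
      · rw [if_neg h2]
    rw [hBv, mul_zero]
  · rw [hApdiv u hu, zero_mul]

end Main
end
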